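/- arXiv:1308.3829 — 5 statements merged into one kernel-verified Lean document; each statement's English description precedes it below -/
import Mathlib

section
/- Let T be a tree with at least 2 nodes and k a positive integer. Let CT be the graph obtained from T by replacing each vertex of T with a clique of size at least k, and making all vertices of cliques corresponding to adjacent vertices of T mutually adjacent. Then for any partition of V(CT) into sets W and B with |W| ≥ k and |B| ≥ k, the graph CT has a matching of size k in which every edge has one endpoint in W and one endpoint in B. -/
/-- A matching of size `m` all of whose edges have one endpoint in `W` and the
other in `B`. -/
def HasCrossMatchingWB {V : Type*} (G : SimpleGraph V) (W B : Set V) (m : ℕ) : Prop :=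
  ∃ f : Fin m → V × V,
    (∀ i, G.Adj (f i).1 (f i).2 ∧ (f i).1 ∈ W ∧ (f i).2 ∈ B) ∧
    (∀ i j : Fin m, i ≠ j → (f i).1 ≠ (f j).1 ∧ (f i).2 ≠ (f j).2) ∧
    (∀ i j : Fin m, (f i).1 ≠ (f j).2)

section Aux

variable {ι : Type*} [Fintype ι] {k : ℕ} {sz : ι → ℕ}

/-- In every fiber (clique) there is a vertex avoiding any set of fewer than `k` vertices. -/
private lemma exists_fiber_notMem (hsz : ∀ u, k ≤ sz u)
    (C : Finset (Σ u : ι, Fin (sz u))) (hC : C.card < k) (u : ι) :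
    ∃ i : Fin (sz u), (⟨u, i⟩ : Σ u : ι, Fin (sz u)) ∉ C := by
  classical
  by_contra h
  push_neg at h
  have hsub : (Finset.univ.image (fun i : Fin (sz u) => (⟨u, i⟩ : Σ u : ι, Fin (sz u)))) ⊆ C := by
    intro a ha
    obtain ⟨i, -, rfl⟩ := Finset.mem_image.mp ha
    exact h i
  have h1 : sz u ≤ C.card := by
    have := Finset.card_le_card hsub
    rwa [Finset.card_image_of_injective _ sigma_mk_injective, Finset.card_univ,
      Fintype.card_fin] at this
  have := hsz u
  omega

/-- Along a walk in `T` between the clique of a white vertex and the clique of a black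
vertex, avoiding a small set `C`, there is a crossing edge avoiding `C`. -/
private lemma cross_of_walk (T : SimpleGraph ι)
    (W B : Set (Σ u : ι, Fin (sz u))) (hWB : W ∪ B = Set.univ) (hdisj : W ∩ B = ∅)
    (hsz : ∀ u, k ≤ sz u) (C : Finset (Σ u : ι, Fin (sz u))) (hC : C.card < k) :
    ∀ {u v : ι} (_ : T.Walk u v) (x y : Σ u : ι, Fin (sz u)), x.1 = u → y.1 = v →
      x ∈ W → y ∈ B → x ∉ C → y ∉ C →
      ∃ w b, w ∈ W ∧ b ∈ B ∧ w ∉ C ∧ b ∉ C ∧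
        (SimpleGraph.fromRel
          (fun a b : Σ u : ι, Fin (sz u) => a.1 = b.1 ∨ T.Adj a.1 b.1)).Adj w b := by
  intro u v p
  induction p with
  | nil =>
    intro x y hx hy hxW hyB hxC hyC
    refine ⟨x, y, hxW, hyB, hxC, hyC, ?_⟩
    have hne : x ≠ y := by
      rintro rfl
      have : x ∈ W ∩ B := ⟨hxW, hyB⟩
      rw [hdisj] at this
      exact this
    exact (SimpleGraph.fromRel_adj _ _ _).mpr ⟨hne, Or.inl (Or.inl (hx.trans hy.symm))⟩
  | @cons u u' v h p ih =>
    intro x y hx hy hxW hyB hxC hyC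
    obtain ⟨i, hi⟩ := exists_fiber_notMem hsz C hC u'
    set z : (Σ u : ι, Fin (sz u)) := ⟨u', i⟩ with hz
    have hzWB : z ∈ W ∪ B := by rw [hWB]; trivial
    rcases hzWB with hzW | hzB
    · exact ih z y rfl hy hzW hyB hi hyC
    · refine ⟨x, z, hxW, hzB, hxC, hi, ?_⟩
      have hne : x ≠ z := by
        intro hxz
        apply h.ne
        rw [← hx, hxz]
      refine (SimpleGraph.fromRel_adj _ _ _).mpr ⟨hne, Or.inl (Or.inr ?_)⟩
      rw [hx]
      exact h

end Aux

/-- crossing-matching lemma for trees of cliques. -/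
theorem stmt4 {ι : Type*} [Fintype ι] (T : SimpleGraph ι) (hT : T.IsTree)
    (hcard : 2 ≤ Fintype.card ι) (k : ℕ) (hk : 0 < k)
    (sz : ι → ℕ) (hsz : ∀ u, k ≤ sz u)
    (W B : Set (Σ u : ι, Fin (sz u)))
    (hWB : W ∪ B = Set.univ) (hdisj : W ∩ B = ∅)
    (hW : k ≤ W.ncard) (hB : k ≤ B.ncard) :
    HasCrossMatchingWB
      (SimpleGraph.fromRel
        (fun a b : Σ u : ι, Fin (sz u) => a.1 = b.1 ∨ T.Adj a.1 b.1)) W B k := by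
  classical
  set G := SimpleGraph.fromRel
    (fun a b : Σ u : ι, Fin (sz u) => a.1 = b.1 ∨ T.Adj a.1 b.1) with hG
  have hconn : T.Connected := hT.isConnected
  -- cardinalities via toFinset
  have hWcard : W.ncard = W.toFinset.card := Set.ncard_eq_toFinset_card' W
  have hBcard : B.ncard = B.toFinset.card := Set.ncard_eq_toFinset_card' B
  have hWk : k ≤ W.toFinset.card := hWcard ▸ hW
  have hBk : k ≤ B.toFinset.card := hBcard ▸ hB
  set d : ℕ := W.toFinset.card - k with hd
  -- key claim: any set of < k vertices misses a crossing edge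
  have key : ∀ C : Finset (Σ u : ι, Fin (sz u)), C.card < k → ∀ x ∈ W, x ∉ C →
      ∃ w b, w ∈ W ∧ b ∈ B ∧ w ∉ C ∧ b ∉ C ∧ G.Adj w b := by
    intro C hC x hxW hxC
    -- find a black vertex outside C
    have hyB : ∃ y ∈ B.toFinset, y ∉ C := by
      by_contra hcon
      push_neg at hcon
      have : B.toFinset ⊆ C := fun y hy => hcon y hy
      have := Finset.card_le_card this
      omega
    obtain ⟨y, hyBf, hyC⟩ := hyB
    have hyB : y ∈ B := Set.mem_toFinset.mp hyBf
    obtain ⟨p⟩ := hconn.preconnected x.1 y.1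
    exact cross_of_walk T W B hWB hdisj hsz C hC p x y rfl rfl hxW hyB hxC hyC
  -- the neighborhood function into B
  set nb : W → Finset (Σ u : ι, Fin (sz u)) := fun x => Finset.univ.filter (fun b => b ∈ B ∧ G.Adj ↑x b) with hnb
  -- Hall system with d dummy vertices
  set t : W → Finset ((Σ u : ι, Fin (sz u)) ⊕ Fin d) :=
    fun x => (nb x).image Sum.inl ∪ Finset.univ.image Sum.inr with ht
  have hall : ∀ s : Finset W, s.card ≤ (s.biUnion t).card := by
    intro s
    rcases s.eq_empty_or_nonempty with rfl | hs
    · simp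
    -- nonempty case
    set N : Finset (Σ u : ι, Fin (sz u)) := s.biUnion nb with hN
    have hsub : N.image Sum.inl ∪ (Finset.univ.image (Sum.inr : Fin d → (Σ u : ι, Fin (sz u)) ⊕ Fin d))
        ⊆ s.biUnion t := by
      intro a ha
      rcases Finset.mem_union.mp ha with ha | ha
      · obtain ⟨b, hb, rfl⟩ := Finset.mem_image.mp ha
        obtain ⟨x, hxs, hbx⟩ := Finset.mem_biUnion.mp hb
        exact Finset.mem_biUnion.mpr ⟨x, hxs,
          Finset.mem_union_left _ (Finset.mem_image_of_mem _ hbx)⟩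
      · obtain ⟨x0, hx0s⟩ := hs
        exact Finset.mem_biUnion.mpr ⟨x0, hx0s, Finset.mem_union_right _ ha⟩
    have hcardunion : (N.image Sum.inl ∪
        (Finset.univ.image (Sum.inr : Fin d → (Σ u : ι, Fin (sz u)) ⊕ Fin d))).card = N.card + d := by
      rw [Finset.card_union_of_disjoint, Finset.card_image_of_injective _ Sum.inl_injective,
        Finset.card_image_of_injective _ Sum.inr_injective, Finset.card_univ, Fintype.card_fin]
      · rw [Finset.disjoint_left]
        rintro a ha hb
        obtain ⟨b, -, rfl⟩ := Finset.mem_image.mp ha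
        obtain ⟨c, -, hc⟩ := Finset.mem_image.mp hb
        exact Sum.inl_ne_inr hc.symm
    have hmain : s.card ≤ N.card + d := by
      by_contra hlt
      push_neg at hlt
      -- build the small cover
      set C : Finset (Σ u : ι, Fin (sz u)) := (W.toFinset \ s.image Subtype.val) ∪ N with hCdef
      have hsimg : s.image Subtype.val ⊆ W.toFinset := by
        intro a ha
        obtain ⟨x, -, rfl⟩ := Finset.mem_image.mp ha
        exact Set.mem_toFinset.mpr x.2
      have hscard : (s.image Subtype.val).card = s.card :=
        Finset.card_image_of_injective _ Subtype.val_injective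
    -- |C| < k
      have hsle : s.card ≤ W.toFinset.card := by
        have := Finset.card_le_card hsimg
        omega
      have hCcard : C.card < k := by
        have h1 : C.card ≤ (W.toFinset \ s.image Subtype.val).card + N.card :=
          Finset.card_union_le _ _
        have h2 : (W.toFinset \ s.image Subtype.val).card
            = W.toFinset.card - s.card := by
          rw [Finset.card_sdiff_of_subset hsimg, hscard]
        omega
      obtain ⟨x0, hx0s⟩ := hs
      have hx0W : (x0 : (Σ u : ι, Fin (sz u))) ∈ W := x0.2
      have hx0C : (x0 : (Σ u : ι, Fin (sz u))) ∉ C := by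
        intro hmem
        rcases Finset.mem_union.mp hmem with hmem | hmem
        · exact (Finset.mem_sdiff.mp hmem).2 (Finset.mem_image_of_mem _ hx0s)
        · obtain ⟨x', -, hx'⟩ := Finset.mem_biUnion.mp hmem
          have : (x0 : (Σ u : ι, Fin (sz u))) ∈ B := (Finset.mem_filter.mp hx').2.1
          have : (x0 : (Σ u : ι, Fin (sz u))) ∈ W ∩ B := ⟨hx0W, this⟩
          rw [hdisj] at this
          exact this
      obtain ⟨w, b, hwW, hbB, hwC, hbC, hadj⟩ := key C hCcard x0 hx0W hx0C
      -- w must come from s, so b ∈ N ⊆ C, contradiction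
      have hws : w ∈ s.image Subtype.val := by
        by_contra hns
        exact hwC (Finset.mem_union_left _
          (Finset.mem_sdiff.mpr ⟨Set.mem_toFinset.mpr hwW, hns⟩))
      obtain ⟨xw, hxws, hxw⟩ := Finset.mem_image.mp hws
      apply hbC
      apply Finset.mem_union_right
      refine Finset.mem_biUnion.mpr ⟨xw, hxws, ?_⟩
      refine Finset.mem_filter.mpr ⟨Finset.mem_univ _, hbB, ?_⟩
      rw [hxw]
      exact hadj
    calc s.card ≤ N.card + d := hmain
      _ = _ := hcardunion.symm
      _ ≤ (s.biUnion t).card := Finset.card_le_card hsub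
  obtain ⟨f, hfinj, hft⟩ := (Finset.all_card_le_biUnion_card_iff_exists_injective t).mp hall
  -- a default vertex
  have hne : Nonempty ι := Fintype.card_pos_iff.mp (by omega)
  obtain ⟨u0⟩ := hne
  have : 0 < sz u0 := lt_of_lt_of_le hk (hsz u0)
  let v0 : (Σ u : ι, Fin (sz u)) := ⟨u0, ⟨0, this⟩⟩
  set g : W → (Σ u : ι, Fin (sz u)) := fun x => Sum.elim id (fun _ => v0) (f x) with hg
  set S : Finset W := Finset.univ.filter (fun x => (f x).isLeft) with hS
  have hSmem : ∀ x ∈ S, f x = Sum.inl (g x) := by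
    intro x hx
    have := (Finset.mem_filter.mp hx).2
    cases hfx : f x with
    | inl b => simp [hg, hfx]
    | inr j => rw [hfx] at this; simp at this
  have hSnb : ∀ x ∈ S, g x ∈ nb x := by
    intro x hx
    have hfx := hft x
    rw [hSmem x hx] at hfx
    rcases Finset.mem_union.mp hfx with hmem | hmem
    · obtain ⟨b, hb, hbe⟩ := Finset.mem_image.mp hmem
      rwa [← Sum.inl_injective hbe]
    · obtain ⟨c, -, hc⟩ := Finset.mem_image.mp hmem
      exact absurd hc (by simp)
  -- S has at least k elements
  have hcompl : Sᶜ.card ≤ d := by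
    have himg : Sᶜ.image f ⊆ Finset.univ.image (Sum.inr : Fin d → (Σ u : ι, Fin (sz u)) ⊕ Fin d) := by
      intro a ha
      obtain ⟨x, hx, rfl⟩ := Finset.mem_image.mp ha
      have hx' : ¬ (f x).isLeft := by
        intro hcon
        exact (Finset.mem_compl.mp hx) (Finset.mem_filter.mpr ⟨Finset.mem_univ _, hcon⟩)
      cases hfx : f x with
      | inl b => rw [hfx] at hx'; simp at hx'
      | inr j => exact Finset.mem_image_of_mem _ (Finset.mem_univ _)
    calc Sᶜ.card = (Sᶜ.image f).card :=
          (Finset.card_image_of_injective _ hfinj).symm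
      _ ≤ (Finset.univ.image (Sum.inr : Fin d → (Σ u : ι, Fin (sz u)) ⊕ Fin d)).card :=
          Finset.card_le_card himg
      _ ≤ (Finset.univ : Finset (Fin d)).card := Finset.card_image_le
      _ = d := by simp
  have hWcardsub : Fintype.card W = W.toFinset.card := Set.toFinset_card W ▸ rfl
  have hSk : k ≤ S.card := by
    have := Finset.card_compl_add_card S
    omega
  obtain ⟨S', hS'sub, hS'card⟩ := Finset.exists_subset_card_eq hSk
  have hS'cardeq : Fintype.card S' = k := by rw [Fintype.card_coe]; exact hS'card
  set c : Fin k → S' := fun i => (Fintype.equivFinOfCardEq hS'cardeq).symm i with hc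
  refine ⟨fun i => (((c i : W) : (Σ u : ι, Fin (sz u))), g (c i : W)), ?_, ?_, ?_⟩
  · intro i
    have hmem : (c i : W) ∈ S := hS'sub (c i).2
    have := hSnb _ hmem
    have hfilt := Finset.mem_filter.mp this
    exact ⟨hfilt.2.2, (c i : W).2, hfilt.2.1⟩
  · intro i j hij
    have hcij : (c i : W) ≠ (c j : W) := by
      intro hcon
      exact hij ((Fintype.equivFinOfCardEq hS'cardeq).symm.injective (Subtype.ext hcon))
    constructor
    · exact fun hcon => hcij (Subtype.ext hcon)
    · intro hcon
      dsimp only at hcon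
      apply hcij
      apply hfinj
      rw [hSmem _ (hS'sub (c i).2), hSmem _ (hS'sub (c j).2), hcon]
  · intro i j
    intro hcon
    dsimp only at hcon
    have h1 : ((c i : W) : (Σ u : ι, Fin (sz u))) ∈ W := (c i : W).2
    have h2 : g (c j : W) ∈ B := by
      have := hSnb _ (hS'sub (c j).2)
      exact (Finset.mem_filter.mp this).2.1
    rw [hcon] at h1
    have : g (c j : W) ∈ W ∩ B := ⟨h1, h2⟩
    rw [hdisj] at this
    exact this
end

section
/- Let T_r denote the complete binary tree of height r and let CT_{r,k} be obtained from T_r by replacing each node by a clique of size k and joining completely the cliques of adjacent nodes. Then for every odd r ≥ 1, the matching width of CT_{r,k} is at least (r+1)k/2. -/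
def HasCrossMatching {V : Type*} (G : SimpleGraph V) (S : Set V) (m : ℕ) : Prop :=
  ∃ f : Fin m → V × V,
    (∀ i, G.Adj (f i).1 (f i).2 ∧ (f i).1 ∈ S ∧ (f i).2 ∉ S) ∧
    ∀ i j : Fin m, i ≠ j → (f i).1 ≠ (f j).1 ∧ (f i).2 ≠ (f j).2

def prefixSet {V : Type*} [Fintype V] (π : Fin (Fintype.card V) ≃ V) (t : ℕ) : Set V :=
  {v | ((π.symm v : Fin (Fintype.card V)) : ℕ) < t}

noncomputable def orderMW {V : Type*} [Fintype V] (G : SimpleGraph V)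
    (π : Fin (Fintype.card V) ≃ V) : ℕ :=
  sSup {m | ∃ t, HasCrossMatching G (prefixSet π t) m}

noncomputable def matchingWidth {V : Type*} [Fintype V] (G : SimpleGraph V) : ℕ :=
  sInf {w | ∃ π : Fin (Fintype.card V) ≃ V, w = orderMW G π}

/-- Nodes of the complete binary tree of height `r`: a level `i ≤ r` and an index
among the `2^i` nodes of that level. -/
abbrev BTNode (r : ℕ) := Σ i : Fin (r + 1), Fin (2 ^ (i : ℕ))

/-- The complete binary tree `T_r` of height `r`: node `(i+1, j)` is a child of
node `(i, j / 2)`. -/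
def btreeGraph (r : ℕ) : SimpleGraph (BTNode r) :=
  SimpleGraph.fromRel
    (fun a b => (a.1 : ℕ) + 1 = (b.1 : ℕ) ∧ (b.2 : ℕ) / 2 = (a.2 : ℕ))

/-- `CT_{r,k}`: each node of `T_r` is replaced by a clique of size `k`, and the
cliques of adjacent nodes are completely joined. -/
def cliqueTree (r k : ℕ) : SimpleGraph (BTNode r × Fin k) :=
  SimpleGraph.fromRel (fun a b => a.1 = b.1 ∨ (btreeGraph r).Adj a.1 b.1)

namespace Stmt7Proof
open Finset

abbrev Vtx (r k : ℕ) := BTNode r × Fin k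

variable {r k : ℕ}


section Counting
variable (π : Fin (Fintype.card (Vtx r k)) ≃ Vtx r k)

def insC (X : Finset (BTNode r)) (t : ℕ) : ℕ :=
  ((X ×ˢ (univ : Finset (Fin k))).filter (fun p => ((π.symm p : Fin _) : ℕ) < t)).card

def outC (X : Finset (BTNode r)) (t : ℕ) : ℕ :=
  ((X ×ˢ (univ : Finset (Fin k))).filter (fun p => ¬ ((π.symm p : Fin _) : ℕ) < t)).card

lemma insC_mono (X : Finset (BTNode r)) {t t' : ℕ} (h : t ≤ t') :
    insC π X t ≤ insC π X t' := by
  apply card_le_card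
  apply monotone_filter_right
  intro p hp
  omega

lemma outC_anti (X : Finset (BTNode r)) {t t' : ℕ} (h : t ≤ t') :
    outC π X t' ≤ outC π X t := by
  apply card_le_card
  apply monotone_filter_right
  intro p hp
  omega

lemma insC_add_outC (X : Finset (BTNode r)) (t : ℕ) :
    insC π X t + outC π X t = X.card * k := by
  rw [insC, outC, card_filter_add_card_filter_not]
  · rw [card_product, card_univ, Fintype.card_fin]

lemma insC_subset {X Y : Finset (BTNode r)} (h : X ⊆ Y) (t : ℕ) :
    insC π X t ≤ insC π Y t := by
  apply card_le_card
  apply filter_subset_filter _ (product_subset_product h (subset_refl _))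

lemma outC_subset {X Y : Finset (BTNode r)} (h : X ⊆ Y) (t : ℕ) :
    outC π X t ≤ outC π Y t := by
  apply card_le_card
  apply filter_subset_filter _ (product_subset_product h (subset_refl _))

lemma insC_zero (X : Finset (BTNode r)) : insC π X 0 = 0 := by
  rw [insC]
  convert card_empty
  rw [filter_eq_empty_iff]
  intro p _
  omega

lemma outC_card (X : Finset (BTNode r)) : outC π X (Fintype.card (Vtx r k)) = 0 := by
  rw [outC]
  convert card_empty
  rw [filter_eq_empty_iff]
  intro p _
  exact fun h => h (π.symm p).isLt

lemma insC_succ_le (X : Finset (BTNode r)) (t : ℕ) :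
    insC π X (t + 1) ≤ insC π X t + 1 := by
  by_cases ht : t < Fintype.card (Vtx r k)
  · have hsub : ((X ×ˢ (univ : Finset (Fin k))).filter
        (fun p => ((π.symm p : Fin _) : ℕ) < t + 1)) ⊆
        insert (π ⟨t, ht⟩) ((X ×ˢ (univ : Finset (Fin k))).filter
        (fun p => ((π.symm p : Fin _) : ℕ) < t)) := by
      intro p hp
      rw [mem_filter] at hp
      rcases Nat.lt_succ_iff_lt_or_eq.mp hp.2 with h | h
      · exact mem_insert_of_mem (mem_filter.mpr ⟨hp.1, h⟩)
      · have : π.symm p = ⟨t, ht⟩ := Fin.ext h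
        have h2 := congrArg π this
        rw [Equiv.apply_symm_apply] at h2
        rw [h2]
        exact mem_insert_self _ _
    calc insC π X (t+1) ≤ _ := card_le_card hsub
    _ ≤ _ + 1 := card_insert_le _ _
  · have : insC π X (t+1) = insC π X t := by
      unfold insC
      congr 1
      apply filter_congr
      intro p _
      have := (π.symm p).isLt
      constructor <;> intro <;> omega
    omega

lemma outC_succ (X : Finset (BTNode r)) (t : ℕ) :
    outC π X t ≤ outC π X (t + 1) + 1 := by
  have h1 := insC_succ_le π X t
  have h2 := insC_add_outC π X t
  have h3 := insC_add_outC π X (t + 1)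
  omega

lemma hitUp (X : Finset (BTNode r)) {c d B : ℕ} (hcd : c ≤ d)
    (h1 : insC π X c ≤ B) (h2 : B ≤ insC π X d) :
    ∃ a, c ≤ a ∧ a ≤ d ∧ insC π X a = B := by
  have hex : ∃ t, B ≤ insC π X t := ⟨d, h2⟩
  classical
  set a := Nat.find hex with ha
  have haP : B ≤ insC π X a := Nat.find_spec hex
  have had : a ≤ d := Nat.find_le h2
  by_cases hac : a ≤ c
  · exact ⟨c, le_refl _, hcd, le_antisymm h1 (le_trans haP (insC_mono π X hac))⟩
  · push_neg at hac
    refine ⟨a, by omega, had, ?_⟩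
    have ha0 : a ≠ 0 := by omega
    obtain ⟨a', ha'⟩ : ∃ a', a = a' + 1 := ⟨a - 1, by omega⟩
    have hlt : insC π X a' < B := by
      by_contra hcon
      push_neg at hcon
      have h5 : Nat.find hex ≤ a' := Nat.find_le hcon
      omega
    have h6 := insC_succ_le π X a'
    rw [ha'] at haP ⊢
    omega

lemma hitDown (X : Finset (BTNode r)) {c d B : ℕ} (hcd : c ≤ d)
    (h1 : outC π X d ≤ B) (h2 : B ≤ outC π X c) :
    ∃ b, c ≤ b ∧ b ≤ d ∧ outC π X b = B := by
  classical
  set b := Nat.findGreatest (fun t => B ≤ outC π X t) d with hb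
  have hbP : B ≤ outC π X b := Nat.findGreatest_spec (P := fun t => B ≤ outC π X t) hcd h2
  have hcb : c ≤ b := Nat.le_findGreatest hcd h2
  have hbd : b ≤ d := Nat.findGreatest_le d
  by_cases hbd' : b = d
  · exact ⟨b, hcb, hbd, le_antisymm (hbd' ▸ h1) hbP⟩
  · have hnb : ¬ B ≤ outC π X (b + 1) :=
      Nat.findGreatest_is_greatest (P := fun t => B ≤ outC π X t) (n := d)
        (by omega) (by omega)
    have := outC_succ π X b
    exact ⟨b, hcb, hbd, by omega⟩

end Counting


def lvl (u : BTNode r) : ℕ := ↑u.1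
def idx (u : BTNode r) : ℕ := ↑u.2

lemma idx_lt (u : BTNode r) : idx u < 2 ^ lvl u := u.2.isLt
lemma lvl_le (u : BTNode r) : lvl u ≤ r := by
  have : lvl u < r + 1 := u.1.isLt
  omega

lemma node_ext {u v : BTNode r} (h1 : lvl u = lvl v) (h2 : idx u = idx v) : u = v := by
  rcases u with ⟨⟨i, hi⟩, ⟨j, hj⟩⟩
  rcases v with ⟨⟨i', hi'⟩, ⟨j', hj'⟩⟩
  simp only [lvl, idx] at h1 h2
  subst h1
  subst h2
  rfl

def mkNode (i j : ℕ) (hi : i ≤ r) (hj : j < 2 ^ i) : BTNode r :=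
  ⟨⟨i, by omega⟩, ⟨j, hj⟩⟩

@[simp] lemma lvl_mkNode (i j : ℕ) (hi : i ≤ r) (hj : j < 2 ^ i) :
    lvl (mkNode i j hi hj) = i := rfl
@[simp] lemma idx_mkNode (i j : ℕ) (hi : i ≤ r) (hj : j < 2 ^ i) :
    idx (mkNode i j hi hj) = j := rfl

def D (v : BTNode r) : Finset (BTNode r) :=
  univ.filter (fun u => lvl v ≤ lvl u ∧ idx u / 2 ^ (lvl u - lvl v) = idx v)

lemma mem_D {u v : BTNode r} :
    u ∈ D v ↔ lvl v ≤ lvl u ∧ idx u / 2 ^ (lvl u - lvl v) = idx v := by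
  simp [D]

lemma mem_D_self (v : BTNode r) : v ∈ D v := by
  rw [mem_D]
  simp

lemma D_trans {u w v : BTNode r} (h1 : u ∈ D w) (h2 : w ∈ D v) : u ∈ D v := by
  rw [mem_D] at *
  obtain ⟨l1, e1⟩ := h1
  obtain ⟨l2, e2⟩ := h2
  refine ⟨by omega, ?_⟩
  have hexp : lvl u - lvl v = (lvl u - lvl w) + (lvl w - lvl v) := by omega
  rw [hexp, pow_add, ← Nat.div_div_eq_div_mul, e1, e2]

lemma eq_of_mem_D_lvl_eq {u v : BTNode r} (h : u ∈ D v) (hl : lvl u = lvl v) : u = v := by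
  rw [mem_D] at h
  apply node_ext hl
  have := h.2
  rw [hl] at this
  simpa using this.symm.trans rfl |>.symm

lemma lvl_lt_of_mem_D_ne {u v : BTNode r} (h : u ∈ D v) (hne : u ≠ v) : lvl v < lvl u := by
  rcases Nat.lt_or_ge (lvl v) (lvl u) with h' | h'
  · exact h'
  · exact absurd (eq_of_mem_D_lvl_eq h (le_antisymm (mem_D.mp h).1 h' |>.symm)) hne

def pnode (u : BTNode r) : BTNode r :=
  if h : 0 < lvl u then
    mkNode (lvl u - 1) (idx u / 2) (by have := lvl_le u; omega)
      (by
        have := idx_lt u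
        have h2 : 2 ^ lvl u = 2 ^ (lvl u - 1) * 2 := by
          rw [← pow_succ]
          congr 1
          omega
        rw [h2, mul_comm] at this
        exact Nat.div_lt_of_lt_mul this)
  else u

lemma lvl_pnode {u : BTNode r} (h : 0 < lvl u) : lvl (pnode u) = lvl u - 1 := by
  rw [pnode, dif_pos h, lvl_mkNode]

lemma idx_pnode {u : BTNode r} (h : 0 < lvl u) : idx (pnode u) = idx u / 2 := by
  rw [pnode, dif_pos h, idx_mkNode]

lemma adj_pnode {u : BTNode r} (h : 0 < lvl u) : (btreeGraph r).Adj (pnode u) u := by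
  rw [btreeGraph, SimpleGraph.fromRel_adj]
  constructor
  · intro heq
    have := congrArg lvl heq
    rw [lvl_pnode h] at this
    omega
  · left
    constructor
    · show lvl (pnode u) + 1 = lvl u
      rw [lvl_pnode h]; omega
    · show idx u / 2 = idx (pnode u)
      rw [idx_pnode h]

lemma mem_D_pnode {u : BTNode r} (h : 0 < lvl u) : u ∈ D (pnode u) := by
  rw [mem_D, lvl_pnode h, idx_pnode h]
  constructor
  · omega
  · have : lvl u - (lvl u - 1) = 1 := by omega
    rw [this, pow_one]

lemma pnode_mem_D {u v : BTNode r} (h : u ∈ D v) (hne : u ≠ v) : pnode u ∈ D v := by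
  have hlt := lvl_lt_of_mem_D_ne h hne
  have h0 : 0 < lvl u := by omega
  rw [mem_D] at h ⊢
  rw [lvl_pnode h0, idx_pnode h0]
  refine ⟨by omega, ?_⟩
  rw [Nat.div_div_eq_div_mul]
  have : 2 * 2 ^ (lvl u - 1 - lvl v) = 2 ^ (lvl u - lvl v) := by
    rw [← pow_succ']
    congr 1
    omega
  rw [this]
  exact h.2

lemma D_disjoint {x y u : BTNode r} (hl : lvl x = lvl y) (hx : u ∈ D x) (hy : u ∈ D y) :
    x = y := by
  rw [mem_D] at hx hy
  exact node_ext hl (by rw [← hx.2, ← hy.2, hl])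

/-- parent-closed region rooted at ρ -/
def PC (R : Finset (BTNode r)) (ρ : BTNode r) : Prop :=
  ρ ∈ R ∧ ∀ u ∈ R, u ≠ ρ → 0 < lvl u ∧ pnode u ∈ R

lemma PC_D (v : BTNode r) : PC (D v) v := by
  refine ⟨mem_D_self v, fun u hu hne => ?_⟩
  have := lvl_lt_of_mem_D_ne hu hne
  exact ⟨by omega, pnode_mem_D hu hne⟩

lemma PC_collar {v g : BTNode r} (hg : g ∈ D v) (hlg : lvl v < lvl g) :
    PC (D v \ D g) v := by
  constructor
  · rw [mem_sdiff]
    refine ⟨mem_D_self v, fun hc => ?_⟩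
    have := (mem_D.mp hc).1
    omega
  · intro u hu hne
    rw [mem_sdiff] at hu
    have hlt := lvl_lt_of_mem_D_ne hu.1 hne
    have h0 : 0 < lvl u := by omega
    refine ⟨h0, ?_⟩
    rw [mem_sdiff]
    refine ⟨pnode_mem_D hu.1 hne, fun hc => ?_⟩
    exact hu.2 (D_trans (mem_D_pnode h0) hc)

lemma expansion {R IA : Finset (BTNode r)} {ρ : BTNode r} (hPC : PC R ρ)
    (hsub : IA ⊆ R) (hne : ∃ w ∈ R, w ∉ IA) (hIA : IA.Nonempty) :
    ∃ w ∈ R, w ∉ IA ∧ ∃ u ∈ IA, (btreeGraph r).Adj w u := by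
  by_cases hρ : ρ ∈ IA
  · obtain ⟨w0, hw0R, hw0⟩ := hne
    have hne' : (R \ IA).Nonempty := ⟨w0, mem_sdiff.mpr ⟨hw0R, hw0⟩⟩
    obtain ⟨u, hu, hmin⟩ := Finset.exists_min_image (R \ IA) lvl hne'
    rw [mem_sdiff] at hu
    have huρ : u ≠ ρ := fun h => hu.2 (h ▸ hρ)
    obtain ⟨h0, hp⟩ := hPC.2 u hu.1 huρ
    have hpIA : pnode u ∈ IA := by
      by_contra hc
      have := hmin (pnode u) (mem_sdiff.mpr ⟨hp, hc⟩)
      rw [lvl_pnode h0] at this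
      omega
    exact ⟨u, hu.1, hu.2, pnode u, hpIA, ((adj_pnode h0).symm : _)⟩
  · obtain ⟨u, hu, hmin⟩ := Finset.exists_min_image IA lvl hIA
    have huρ : u ≠ ρ := fun h => hρ (h ▸ hu)
    obtain ⟨h0, hp⟩ := hPC.2 u (hsub hu) huρ
    have hpIA : pnode u ∉ IA := by
      intro hc
      have := hmin (pnode u) hc
      rw [lvl_pnode h0] at this
      omega
    exact ⟨pnode u, hp, hpIA, u, hu, adj_pnode h0⟩



-- from part1 (counting): we re-declare signatures as axioms here for isolated compile;
-- final file will have real proofs.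
section CT

lemma adj_same_node {p q : Vtx r k} (hne : p ≠ q) (h : p.1 = q.1) :
    (cliqueTree r k).Adj p q := by
  rw [cliqueTree, SimpleGraph.fromRel_adj]
  exact ⟨hne, Or.inl (Or.inl h)⟩

lemma adj_btree {p q : Vtx r k} (h : (btreeGraph r).Adj p.1 q.1) :
    (cliqueTree r k).Adj p q := by
  rw [cliqueTree, SimpleGraph.fromRel_adj]
  refine ⟨fun hc => h.ne (congrArg Prod.fst hc), Or.inl (Or.inr h)⟩

end CT

section Region
variable (π : Fin (Fintype.card (Vtx r k)) ≃ Vtx r k)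

lemma region_matching (hk : 1 ≤ k) {R : Finset (BTNode r)} {ρ : BTNode r} (hPC : PC R ρ)
    {t : ℕ} (hI : k ≤ insC π R t) (hO : k ≤ outC π R t) :
    ∃ f : Fin k → Vtx r k × Vtx r k,
      (∀ i, (cliqueTree r k).Adj (f i).1 (f i).2 ∧
        ((π.symm (f i).1 : Fin _) : ℕ) < t ∧ ¬ ((π.symm (f i).2 : Fin _) : ℕ) < t ∧
        (f i).1.1 ∈ R ∧ (f i).2.1 ∈ R) ∧
      (∀ i j, i ≠ j → (f i).1 ≠ (f j).1 ∧ (f i).2 ≠ (f j).2) := by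
  classical
  set I : Finset (Vtx r k) :=
    (R ×ˢ (univ : Finset (Fin k))).filter (fun p => ((π.symm p : Fin _) : ℕ) < t) with hIdef
  set O : Finset (Vtx r k) :=
    (R ×ˢ (univ : Finset (Fin k))).filter (fun p => ¬ ((π.symm p : Fin _) : ℕ) < t) with hOdef
  have hIcard : I.card = insC π R t := rfl
  have hOcard : O.card = outC π R t := rfl
  have hIk : k ≤ I.card := hIcard ▸ hI
  have hOk : k ≤ O.card := hOcard ▸ hO
  have hInode : ∀ p ∈ I, p.1 ∈ R := by
    intro p hp
    rw [hIdef, mem_filter, mem_product] at hp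
    exact hp.1.1
  have hOnode : ∀ p ∈ O, p.1 ∈ R := by
    intro p hp
    rw [hOdef, mem_filter, mem_product] at hp
    exact hp.1.1
  have hIpos : ∀ p ∈ I, ((π.symm p : Fin _) : ℕ) < t := by
    intro p hp; rw [hIdef, mem_filter] at hp; exact hp.2
  have hOpos : ∀ p ∈ O, ¬ ((π.symm p : Fin _) : ℕ) < t := by
    intro p hp; rw [hOdef, mem_filter] at hp; exact hp.2
  set Dn := I.card - k with hDn
  set tf : ↥I → Finset (Vtx r k ⊕ Fin Dn) := fun a =>
    ((O.filter (fun y => (cliqueTree r k).Adj ↑a y)).image Sum.inl) ∪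
      ((univ : Finset (Fin Dn)).image Sum.inr) with htf
  have hHall : ∀ A : Finset ↥I, A.card ≤ (A.biUnion tf).card := by
    intro A
    rcases A.eq_empty_or_nonempty with rfl | hAne
    · simp
    set NA : Finset (Vtx r k) :=
      A.biUnion (fun a => O.filter (fun y => (cliqueTree r k).Adj ↑a y)) with hNA
    have hbig : NA.card + Dn ≤ (A.biUnion tf).card := by
      have hsub : NA.image Sum.inl ∪ (univ : Finset (Fin Dn)).image Sum.inr ⊆
          A.biUnion tf := by
        intro x hx
        rcases mem_union.mp hx with hx | hx
        · obtain ⟨y, hy, rfl⟩ := mem_image.mp hx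
          obtain ⟨a, ha, hya⟩ := mem_biUnion.mp hy
          exact mem_biUnion.mpr ⟨a, ha, mem_union_left _ (mem_image_of_mem _ hya)⟩
        · obtain ⟨a₀, ha₀⟩ := hAne
          exact mem_biUnion.mpr ⟨a₀, ha₀, mem_union_right _ hx⟩
      have hdisj : Disjoint (NA.image Sum.inl) ((univ : Finset (Fin Dn)).image Sum.inr) := by
        rw [disjoint_left]
        rintro x hx hx'
        obtain ⟨y, _, rfl⟩ := mem_image.mp hx
        obtain ⟨z, _, hz⟩ := mem_image.mp hx'
        exact Sum.inl_ne_inr hz.symm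
      calc NA.card + Dn
          = (NA.image Sum.inl).card + ((univ : Finset (Fin Dn)).image Sum.inr).card := by
            rw [card_image_of_injective _ Sum.inl_injective,
              card_image_of_injective _ Sum.inr_injective, card_univ, Fintype.card_fin]
        _ = (NA.image Sum.inl ∪ (univ : Finset (Fin Dn)).image Sum.inr).card :=
            (card_union_of_disjoint hdisj).symm
        _ ≤ _ := card_le_card hsub
    set IA : Finset (BTNode r) := A.image (fun a => a.1.1) with hIAdef
    have hIAsub : IA ⊆ R := by
      intro x hx
      obtain ⟨a, _, rfl⟩ := mem_image.mp hx
      exact hInode _ a.2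
    have hmemNA : ∀ y ∈ O, y.1 ∈ IA → y ∈ NA := by
      intro y hy hyIA
      obtain ⟨a, ha, hnode⟩ := mem_image.mp hyIA
      refine mem_biUnion.mpr ⟨a, ha, mem_filter.mpr ⟨hy, ?_⟩⟩
      apply adj_same_node _ hnode
      intro hc
      exact hOpos y hy (hc ▸ hIpos _ a.2)
    have hAcard : A.card ≤ (I.filter (fun p => p.1 ∈ IA)).card := by
      apply card_le_card_of_injOn (fun a => a.1)
      · intro a ha
        refine mem_filter.mpr ⟨a.2, mem_image_of_mem _ ha⟩
      · intro a _ b _ hab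
        exact Subtype.ext hab
    by_cases hcase : R ⊆ IA
    · have hOsub : O ⊆ NA := fun y hy => hmemNA y hy (hcase (hOnode y hy))
      have h1 : k ≤ NA.card := le_trans hOk (card_le_card hOsub)
      have h2 : A.card ≤ I.card := by
        calc A.card ≤ (univ : Finset ↥I).card := card_le_card (subset_univ A)
        _ = I.card := by rw [card_univ, Fintype.card_coe]
      omega
    · obtain ⟨w0, hw0R, hw0⟩ := Finset.not_subset.mp hcase
      have hIAne : IA.Nonempty := hAne.image _
      obtain ⟨w, hwR, hwIA, u, huIA, hadj⟩ :=
        expansion hPC hIAsub ⟨w0, hw0R, hw0⟩ hIAne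
      have hsub2 : O.filter (fun y => y.1 ∈ IA) ∪ O.filter (fun y => y.1 = w) ⊆ NA := by
        intro y hy
        rcases mem_union.mp hy with hy | hy
        · exact hmemNA y (mem_filter.mp hy).1 (mem_filter.mp hy).2
        · obtain ⟨hyO, hyw⟩ := mem_filter.mp hy
          obtain ⟨a, ha, hnode⟩ := mem_image.mp huIA
          refine mem_biUnion.mpr ⟨a, ha, mem_filter.mpr ⟨hyO, ?_⟩⟩
          apply adj_btree
          rw [hnode, hyw]
          exact hadj.symm
      have hdisj2 : Disjoint (O.filter (fun y => y.1 ∈ IA)) (O.filter (fun y => y.1 = w)) := by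
        rw [disjoint_left]
        intro y hy hy'
        exact hwIA ((mem_filter.mp hy').2 ▸ (mem_filter.mp hy).2)
      have hNA2 : (O.filter (fun y => y.1 ∈ IA)).card + (O.filter (fun y => y.1 = w)).card
          ≤ NA.card := by
        rw [← card_union_of_disjoint hdisj2]
        exact card_le_card hsub2
      have hrow : (I.filter (fun p => p.1 = w)).card + (O.filter (fun p => p.1 = w)).card
          = k := by
        have hcomm1 : I.filter (fun p => p.1 = w) =
            ((R ×ˢ (univ : Finset (Fin k))).filter (fun p => p.1 = w)).filter
              (fun p => ((π.symm p : Fin _) : ℕ) < t) := by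
          rw [hIdef, filter_filter, filter_filter]
          apply filter_congr
          intro p _
          constructor
          · rintro ⟨h1, h2⟩; exact ⟨h2, h1⟩
          · rintro ⟨h1, h2⟩; exact ⟨h2, h1⟩
        have hcomm2 : O.filter (fun p => p.1 = w) =
            ((R ×ˢ (univ : Finset (Fin k))).filter (fun p => p.1 = w)).filter
              (fun p => ¬ ((π.symm p : Fin _) : ℕ) < t) := by
          rw [hOdef, filter_filter, filter_filter]
          apply filter_congr
          intro p _
          constructor
          · rintro ⟨h1, h2⟩; exact ⟨h2, h1⟩
          · rintro ⟨h1, h2⟩; exact ⟨h2, h1⟩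
        rw [hcomm1, hcomm2, card_filter_add_card_filter_not]
        have hset : (R ×ˢ (univ : Finset (Fin k))).filter (fun p => p.1 = w)
            = {w} ×ˢ (univ : Finset (Fin k)) := by
          ext p
          rw [mem_filter, mem_product, mem_product, mem_singleton]
          constructor
          · rintro ⟨⟨_, h2⟩, h3⟩; exact ⟨h3, h2⟩
          · rintro ⟨h1, h2⟩; exact ⟨⟨h1 ▸ hwR, h2⟩, h1⟩
        rw [hset, card_product, card_singleton, card_univ, Fintype.card_fin, one_mul]
      have hIsplit : (I.filter (fun p => p.1 ∈ IA)).card + (I.filter (fun p => p.1 = w)).card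
          ≤ I.card := by
        have hd : Disjoint (I.filter (fun p => p.1 ∈ IA)) (I.filter (fun p => p.1 = w)) := by
          rw [disjoint_left]
          intro p hp hp'
          exact hwIA ((mem_filter.mp hp').2 ▸ (mem_filter.mp hp).2)
        rw [← card_union_of_disjoint hd]
        exact card_le_card (union_subset (filter_subset _ _) (filter_subset _ _))
      omega
  obtain ⟨F, hFinj, hFmem⟩ :=
    (Finset.all_card_le_biUnion_card_iff_exists_injective tf).mp hHall
  set J : Finset ↥I := univ.filter (fun a => (F a).isLeft) with hJ
  have hJcard : k ≤ J.card := by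
    have hJc : (univ.filter (fun a : ↥I => ¬ (F a).isLeft)).card ≤ Dn := by
      calc (univ.filter (fun a : ↥I => ¬ (F a).isLeft)).card
          ≤ ((univ : Finset (Fin Dn)).image Option.some).card := by
            apply card_le_card_of_injOn (fun a => (F a).getRight?)
            · intro a ha
              rw [mem_coe, mem_filter] at ha
              rcases hFa : F a with y | z
              · rw [hFa] at ha; simp at ha
              · exact mem_image.mpr ⟨z, mem_univ _, by simp [hFa]⟩
            · intro a ha b hb hab
              simp only [coe_filter, Set.mem_setOf_eq] at ha hb
              rcases hFa : F a with y | z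
              · rw [hFa] at ha; simp at ha
              rcases hFb : F b with y' | z'
              · rw [hFb] at hb; simp at hb
              apply hFinj
              rw [hFa, hFb]
              have hab' : (Sum.inr z : Vtx r k ⊕ Fin Dn).getRight?
                  = (Sum.inr z' : Vtx r k ⊕ Fin Dn).getRight? := by
                simpa only [hFa, hFb] using hab
              simpa using hab'
        _ = Dn := by rw [card_image_of_injective _ (Option.some_injective _), card_univ,
              Fintype.card_fin]
    have hsum : J.card + (univ.filter (fun a : ↥I => ¬ (F a).isLeft)).card = I.card := by
      rw [hJ, card_filter_add_card_filter_not, card_univ, Fintype.card_coe]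
    omega
  obtain ⟨J', hJ'sub, hJ'card⟩ := Finset.exists_subset_card_eq hJcard
  have hcard' : Fintype.card ↥J' = k := by rw [Fintype.card_coe, hJ'card]
  set eqv := (Fintype.equivFinOfCardEq hcard').symm with heqv
  have hYex : ∀ a : ↥I, a ∈ J' → ∃ y, F a = Sum.inl y ∧ y ∈ O ∧
      (cliqueTree r k).Adj ↑a y := by
    intro a ha
    have haJ : a ∈ J := hJ'sub ha
    rw [hJ, mem_filter] at haJ
    rcases hFa : F a with y | z
    · have hmem := hFmem a
      rw [hFa] at hmem
      rcases mem_union.mp hmem with h | h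
      · obtain ⟨y', hy', he⟩ := mem_image.mp h
        obtain ⟨h1, h2⟩ := mem_filter.mp hy'
        injection he with he'
        exact ⟨y, rfl, he' ▸ h1, he' ▸ h2⟩
      · obtain ⟨z, _, hz⟩ := mem_image.mp h
        exact absurd hz (by simp)
    · rw [hFa] at haJ; simp at haJ
  choose Y hY1 hY2 hY3 using hYex
  refine ⟨fun i => (↑(↑(eqv i) : ↥I), Y ↑(eqv i) (eqv i).2), fun i => ?_, fun i j hij => ?_⟩
  · refine ⟨hY3 _ _, hIpos _ (↑(eqv i) : ↥I).2, hOpos _ (hY2 _ _), ?_, ?_⟩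
    · exact hInode _ (↑(eqv i) : ↥I).2
    · exact hOnode _ (hY2 _ _)
  · have hne : (↑(eqv i) : ↥I) ≠ ↑(eqv j) := by
      intro hc
      exact hij (eqv.injective (Subtype.ext hc))
    constructor
    · intro hc
      exact hne (Subtype.ext hc)
    · intro hc
      apply hne
      apply hFinj
      rw [hY1 ↑(eqv i) (eqv i).2, hY1 ↑(eqv j) (eqv j).2]
      exact congrArg Sum.inl hc

end Region

section Rec
variable (π : Fin (Fintype.card (Vtx r k)) ≃ Vtx r k)

lemma D_sub {w v : BTNode r} (hw : w ∈ D v) : D w ⊆ D v := fun _ hu => D_trans hu hw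

lemma child_mem {v : BTNode r} (hv : lvl v < r) :
    ∃ u ∈ D v, lvl u = lvl v + 1 := by
  refine ⟨mkNode (lvl v + 1) (2 * idx v) (by omega)
    (by have := idx_lt v; rw [pow_succ]; omega), ?_, rfl⟩
  rw [mem_D, lvl_mkNode, idx_mkNode]
  refine ⟨by omega, ?_⟩
  have h1 : lvl v + 1 - lvl v = 1 := by omega
  rw [h1, pow_one, Nat.mul_div_cancel_left _ (by norm_num : 0 < 2)]

lemma two_le_card_D {v : BTNode r} (hv : lvl v < r) : 2 ≤ (D v).card := by
  obtain ⟨u, hu, hul⟩ := child_mem hv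
  have : 1 < (D v).card := Finset.one_lt_card.mpr
    ⟨v, mem_D_self v, u, hu, fun hc => by have := congrArg lvl hc; omega⟩
  omega

/-- main recursion -/
lemma REC (hk : 1 ≤ k) : ∀ s : ℕ, ∀ v : BTNode r, lvl v + (2*s+1) = r →
    ∀ c d : ℕ, c ≤ d → insC π (D v) c ≤ k → outC π (D v) d ≤ k →
    ∃ t, c ≤ t ∧ t ≤ d ∧ ∃ f : Fin ((s+1)*k) → Vtx r k × Vtx r k,
      (∀ i, (cliqueTree r k).Adj (f i).1 (f i).2 ∧
        ((π.symm (f i).1 : Fin _) : ℕ) < t ∧ ¬((π.symm (f i).2 : Fin _) : ℕ) < t ∧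
        (f i).1.1 ∈ D v ∧ (f i).2.1 ∈ D v) ∧
      (∀ i j, i ≠ j → (f i).1 ≠ (f j).1 ∧ (f i).2 ≠ (f j).2) := by
  intro s
  induction s with
  | zero =>
    intro v hlv c d hcd hins houts
    have hvr : lvl v < r := by omega
    have h2 : 2 ≤ (D v).card := two_le_card_D hvr
    have htot := insC_add_outC π (D v) d
    have hhit : k ≤ insC π (D v) d := by nlinarith [houts, htot, h2, hk]
    obtain ⟨t, hct, htd, hval⟩ := hitUp π (D v) hcd hins hhit
    have htott := insC_add_outC π (D v) t
    have houtt : k ≤ outC π (D v) t := by nlinarith [htott, h2, hk, hval]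
    obtain ⟨f, hf1, hf2⟩ := region_matching π hk (PC_D v) (le_of_eq hval.symm) houtt
    refine ⟨t, hct, htd, ?_⟩
    rw [show (0+1)*k = k by ring]
    exact ⟨f, fun i => (hf1 i), hf2⟩
  | succ s IH =>
    intro v hlv c d hcd hins houts
    have hl2 : lvl v + 2 ≤ r := by omega
    have hjlt : idx v < 2 ^ lvl v := idx_lt v
    have hglt : ∀ m : ℕ, m < 4 → 4 * idx v + m < 2 ^ (lvl v + 2) := by
      intro m hm
      have hpow : 2 ^ (lvl v + 2) = 4 * 2 ^ lvl v := by ring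
      omega
    let g : Fin 4 → BTNode r := fun m => mkNode (lvl v + 2) (4 * idx v + ↑m) hl2
      (hglt ↑m m.isLt)
    have hlvlg : ∀ m, lvl (g m) = lvl v + 2 := fun m => rfl
    have hidxg : ∀ m, idx (g m) = 4 * idx v + ↑m := fun m => rfl
    have hgmem : ∀ m, g m ∈ D v := by
      intro m
      rw [mem_D, hlvlg m, hidxg m]
      refine ⟨by omega, ?_⟩
      have h4 : lvl v + 2 - lvl v = 2 := by omega
      rw [h4, show (2:ℕ)^2 = 4 by norm_num,
        Nat.mul_add_div (by norm_num : 0 < 4), Nat.div_eq_of_lt m.isLt, add_zero]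
    have hgne : ∀ m m' : Fin 4, m ≠ m' → g m ≠ g m' := by
      intro m m' hne hc
      have h1 := congrArg idx hc
      rw [hidxg m, hidxg m'] at h1
      exact hne (Fin.ext (by omega))
    have hgdisj : ∀ m m' : Fin 4, m ≠ m' → D (g m) ⊆ D v \ D (g m') := by
      intro m m' hne u hu
      rw [mem_sdiff]
      refine ⟨D_sub (hgmem m) hu, fun hc => ?_⟩
      exact hgne m m' hne (D_disjoint (by rw [hlvlg m, hlvlg m']) hu hc)
    have hg2 : ∀ m, 2 ≤ (D (g m)).card := by
      intro m
      apply two_le_card_D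
      rw [hlvlg m]
      omega
    have hwin : ∀ m : Fin 4, ∃ a b, c ≤ a ∧ a ≤ b ∧ b ≤ d ∧
        insC π (D (g m)) a = k ∧ outC π (D (g m)) b = k := by
      intro m
      have hgins_c : insC π (D (g m)) c ≤ k :=
        le_trans (insC_subset π (D_sub (hgmem m)) c) hins
      have hgouts_d : outC π (D (g m)) d ≤ k :=
        le_trans (outC_subset π (D_sub (hgmem m)) d) houts
      have htot := insC_add_outC π (D (g m)) d
      have hhit : k ≤ insC π (D (g m)) d := by nlinarith [hg2 m, hk]
      obtain ⟨a, hca, had, hvala⟩ := hitUp π (D (g m)) hcd hgins_c hhit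
      have htota := insC_add_outC π (D (g m)) a
      have houta : k ≤ outC π (D (g m)) a := by nlinarith [hg2 m, hk]
      obtain ⟨b, hab, hbd, hvalb⟩ := hitDown π (D (g m)) had hgouts_d houta
      exact ⟨a, b, hca, hab, hbd, hvala, hvalb⟩
    choose A B hcA hAB hBd hvA hvB using hwin
    set FL : Fin 4 → Prop := fun m => ∃ u, A m ≤ u ∧ u ≤ B m ∧
      insC π (D v \ D (g m)) u < k with hFLdef
    set FH : Fin 4 → Prop := fun m => ∃ u, A m ≤ u ∧ u ≤ B m ∧
      outC π (D v \ D (g m)) u < k with hFHdef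
    have hFLone : ∀ m m' : Fin 4, m ≠ m' → FL m → FL m' → False := by
      have key : ∀ m m' : Fin 4, m ≠ m' → ∀ u u', A m ≤ u → u ≤ B m →
          insC π (D v \ D (g m)) u < k → A m' ≤ u' → u' ≤ B m' →
          insC π (D v \ D (g m')) u' < k → u ≤ u' → False := by
        intro m m' hne u u' hau hub hu hau' hub' hu' huu'
        have h1 : k ≤ insC π (D (g m)) u' := by
          calc k = insC π (D (g m)) (A m) := (hvA m).symm
          _ ≤ insC π (D (g m)) u' := insC_mono π _ (by omega)
        have h2 : insC π (D (g m)) u' ≤ insC π (D v \ D (g m')) u' :=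
          insC_subset π (hgdisj m m' hne) u'
        omega
      intro m m' hne ⟨u, hau, hub, hu⟩ ⟨u', hau', hub', hu'⟩
      rcases le_total u u' with h | h
      · exact key m m' hne u u' hau hub hu hau' hub' hu' h
      · exact key m' m hne.symm u' u hau' hub' hu' hau hub hu h
    have hFHone : ∀ m m' : Fin 4, m ≠ m' → FH m → FH m' → False := by
      have key : ∀ m m' : Fin 4, m ≠ m' → ∀ u u', A m ≤ u → u ≤ B m →
          outC π (D v \ D (g m)) u < k → A m' ≤ u' → u' ≤ B m' →
          outC π (D v \ D (g m')) u' < k → u' ≤ u → False := by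
        intro m m' hne u u' hau hub hu hau' hub' hu' huu'
        have h1 : k ≤ outC π (D (g m)) u' := by
          calc k = outC π (D (g m)) (B m) := (hvB m).symm
          _ ≤ outC π (D (g m)) u' := outC_anti π _ (by omega)
        have h2 : outC π (D (g m)) u' ≤ outC π (D v \ D (g m')) u' :=
          outC_subset π (hgdisj m m' hne) u'
        omega
      intro m m' hne ⟨u, hau, hub, hu⟩ ⟨u', hau', hub', hu'⟩
      rcases le_total u' u with h | h
      · exact key m m' hne u u' hau hub hu hau' hub' hu' h
      · exact key m' m hne.symm u' u hau' hub' hu' hau hub hu h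
    -- pigeonhole: some m with ¬FL m ∧ ¬FH m
    have hpick : ∃ m : Fin 4, ¬ FL m ∧ ¬ FH m := by
      by_contra hc
      push_neg at hc
      have h0 := hc 0
      have h1 := hc 1
      have h2 := hc 2
      by_cases hL0 : FL 0
      · by_cases hL1 : FL 1
        · exact hFLone 0 1 (by decide) hL0 hL1
        · have hH1 : FH 1 := h1 hL1
          by_cases hL2 : FL 2
          · exact hFLone 0 2 (by decide) hL0 hL2
          · exact hFHone 1 2 (by decide) hH1 (h2 hL2)
      · have hH0 : FH 0 := h0 hL0
        by_cases hH1 : FH 1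
        · exact hFHone 0 1 (by decide) hH0 hH1
        · have hL1 : FL 1 := by
            by_contra hc1
            exact hH1 (h1 hc1)
          by_cases hL2 : FL 2
          · exact hFLone 1 2 (by decide) hL1 hL2
          · exact hFHone 0 2 (by decide) hH0 (h2 hL2)
    obtain ⟨m, hnFL, hnFH⟩ := hpick
    simp only [hFLdef] at hnFL
    simp only [hFHdef] at hnFH
    push_neg at hnFL hnFH
    -- recurse into g m
    have hlvrec : lvl (g m) + (2*s+1) = r := by rw [hlvlg m]; omega
    obtain ⟨t, hAt, htB, f_in, hf_in1, hf_in2⟩ := IH (g m) hlvrec (A m) (B m) (hAB m)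
      (le_of_eq (hvA m)) (le_of_eq (hvB m))
    -- collar region at time t
    have hRins : k ≤ insC π (D v \ D (g m)) t := hnFL t hAt htB
    have hRouts : k ≤ outC π (D v \ D (g m)) t := hnFH t hAt htB
    have hPCcol : PC (D v \ D (g m)) v := PC_collar (hgmem m) (by rw [hlvlg m]; omega)
    obtain ⟨f_R, hfR1, hfR2⟩ := region_matching π hk hPCcol hRins hRouts
    refine ⟨t, le_trans (hcA m) hAt, le_trans htB (hBd m), ?_⟩
    have hsz : (s + 1 + 1) * k = (s+1)*k + k := by ring
    rw [hsz]
    -- combine the two matchings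
    refine ⟨fun i => if h : (i : ℕ) < (s+1)*k then f_in ⟨i, h⟩
      else f_R ⟨(i : ℕ) - (s+1)*k, by omega⟩, ?_, ?_⟩
    · intro i
      by_cases h : (i : ℕ) < (s+1)*k
      · simp only [dif_pos h]
        obtain ⟨ha, hb, hc', hd', he⟩ := hf_in1 ⟨i, h⟩
        exact ⟨ha, hb, hc', D_sub (hgmem m) hd', D_sub (hgmem m) he⟩
      · simp only [dif_neg h]
        obtain ⟨ha, hb, hc', hd', he⟩ := hfR1 ⟨(i : ℕ) - (s+1)*k, by omega⟩
        exact ⟨ha, hb, hc', (mem_sdiff.mp hd').1, (mem_sdiff.mp he).1⟩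
    · intro i i' hne
      by_cases h : (i : ℕ) < (s+1)*k <;> by_cases h' : (i' : ℕ) < (s+1)*k
      · simp only [dif_pos h, dif_pos h']
        apply hf_in2
        intro hc
        apply hne
        exact Fin.ext (Fin.mk_eq_mk.mp hc)
      · simp only [dif_pos h, dif_neg h']
        constructor
        · intro hc
          have h1 := (hf_in1 ⟨i, h⟩).2.2.2.1
          have h2 := (hfR1 ⟨(i' : ℕ) - (s+1)*k, by omega⟩).2.2.2.1
          rw [hc] at h1
          exact (mem_sdiff.mp h2).2 (by
            have : (f_R ⟨(i' : ℕ) - (s+1)*k, by omega⟩).1.1 ∈ D (g m) := h1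
            exact this)
        · intro hc
          have h1 := (hf_in1 ⟨i, h⟩).2.2.2.2
          have h2 := (hfR1 ⟨(i' : ℕ) - (s+1)*k, by omega⟩).2.2.2.2
          rw [hc] at h1
          exact (mem_sdiff.mp h2).2 h1
      · simp only [dif_neg h, dif_pos h']
        constructor
        · intro hc
          have h1 := (hf_in1 ⟨i', h'⟩).2.2.2.1
          have h2 := (hfR1 ⟨(i : ℕ) - (s+1)*k, by omega⟩).2.2.2.1
          rw [← hc] at h1
          exact (mem_sdiff.mp h2).2 h1
        · intro hc
          have h1 := (hf_in1 ⟨i', h'⟩).2.2.2.2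
          have h2 := (hfR1 ⟨(i : ℕ) - (s+1)*k, by omega⟩).2.2.2.2
          rw [← hc] at h1
          exact (mem_sdiff.mp h2).2 h1
      · simp only [dif_neg h, dif_neg h']
        apply hfR2
        intro hc
        apply hne
        have hvv : (i : ℕ) - (s+1)*k = (i' : ℕ) - (s+1)*k := Fin.mk_eq_mk.mp hc
        have hi := i.isLt
        have hi' := i'.isLt
        apply Fin.ext
        omega
end Rec

section Final

lemma cross_le_card {V : Type*} [Fintype V] (G : SimpleGraph V) (S : Set V) (m : ℕ)
    (h : HasCrossMatching G S m) : m ≤ Fintype.card V := by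
  obtain ⟨f, h1, h2⟩ := h
  have hinj : Function.Injective (fun i : Fin m => (f i).1) := by
    intro i j hij
    by_contra hne
    exact (h2 i j hne).1 hij
  calc m = Fintype.card (Fin m) := (Fintype.card_fin m).symm
  _ ≤ Fintype.card V := Fintype.card_le_of_injective _ hinj

lemma main_per_order (hk : 1 ≤ k) {s : ℕ} (hodd : r = 2*s+1)
    (π : Fin (Fintype.card (Vtx r k)) ≃ Vtx r k) :
    ∃ t, HasCrossMatching (cliqueTree r k) (prefixSet π t) ((s+1)*k) := by
  have h0r : (0:ℕ) < r + 1 := by omega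
  let v0 : BTNode r := ⟨⟨0, h0r⟩, ⟨0, by norm_num⟩⟩
  have hlv : lvl v0 + (2*s+1) = r := by
    have : lvl v0 = 0 := rfl
    omega
  have h0 : insC π (D v0) 0 ≤ k := by rw [insC_zero]; omega
  have hn : outC π (D v0) (Fintype.card (Vtx r k)) ≤ k := by rw [outC_card]; omega
  obtain ⟨t, _, _, f, hf1, hf2⟩ := REC π hk s v0 hlv 0 (Fintype.card (Vtx r k))
    (Nat.zero_le _) h0 hn
  refine ⟨t, f, fun i => ⟨(hf1 i).1, ?_, ?_⟩, hf2⟩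
  · exact (hf1 i).2.1
  · exact fun hmem => (hf1 i).2.2.1 hmem

end Final
end Stmt7Proof


/-- for odd r ≥ 1, the matching width of CT_{r,k} is at least
(r+1)k/2 (stated multiplied by 2 to avoid division). -/
theorem stmt7 (r k : ℕ) (hk : 1 ≤ k) (hr : 1 ≤ r) (hodd : Odd r) :
    (r + 1) * k ≤ 2 * matchingWidth (cliqueTree r k) := by
  obtain ⟨s, hs⟩ := hodd
  have hs' : r = 2*s+1 := by omega
  have hbound : (s+1)*k ≤ matchingWidth (cliqueTree r k) := by
    apply le_csInf
    · exact ⟨orderMW (cliqueTree r k) (Fintype.equivFin _).symm,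
        (Fintype.equivFin _).symm, rfl⟩
    · rintro w ⟨π, rfl⟩
      obtain ⟨t, hmatch⟩ := Stmt7Proof.main_per_order hk hs' π
      apply le_csSup
      · refine ⟨Fintype.card (Stmt7Proof.Vtx r k), ?_⟩
        rintro m ⟨t', hm⟩
        exact Stmt7Proof.cross_le_card _ _ _ hm
      · exact ⟨t, hmatch⟩
  calc (r+1)*k = 2*((s+1)*k) := by rw [hs']; ring
  _ ≤ 2 * matchingWidth (cliqueTree r k) := by omega
end

section
/- Let G be a graph with matching width t, and let F = CNF(G). Then every permutation π of Var(F) has a prefix π_1 such that the number of distinct subfunctions F_S, over assignments S to the variables of π_1, is at least 2^t. -/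
/-- An OBDD over `n` Boolean variables, whose global variable order is the order
of the indices `Fin n`.  Nodes are `Fin size`; a node labelled `Sum.inr b` is a
sink with value `b`; a node labelled `Sum.inl i` reads variable `i` and branches
to `lo`/`hi`.  Along every edge the variable index strictly increases, so along
every root-to-sink path the variables appear according to the fixed order. -/
structure OBDD (n : ℕ) where
  size : ℕ
  root : Fin size
  label : Fin size → Fin n ⊕ Bool
  lo : Fin size → Fin size
  hi : Fin size → Fin size
  increasing : ∀ u (i : Fin n), label u = Sum.inl i →
    (∀ j : Fin n, label (lo u) = Sum.inl j → i < j) ∧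
    (∀ j : Fin n, label (hi u) = Sum.inl j → i < j)

def OBDD.evalAux {n : ℕ} (D : OBDD n) : ℕ → Fin D.size → (Fin n → Bool) → Bool
  | 0, _, _ => false
  | fuel + 1, u, x =>
    match D.label u with
    | Sum.inr b => b
    | Sum.inl i => D.evalAux fuel (if x i then D.hi u else D.lo u) x

/-- The Boolean function computed by an OBDD (by `increasing`, a sink is always
reached within `n + 1` steps). -/
def OBDD.eval {n : ℕ} (D : OBDD n) (x : Fin n → Bool) : Bool :=
  D.evalAux (n + 1) D.root x

/-- `D` computes the Boolean function `F` on variable set `V`, where the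
bijection `π` lists the variables in the order used by `D`. -/
def OBDD.Computes {n : ℕ} {V : Type*} (D : OBDD n) (F : (V → Bool) → Bool)
    (π : Fin n ≃ V) : Prop :=
  ∀ x : V → Bool, D.eval (fun i => x (π i)) = F x

/-- The subfunction of `F` obtained by fixing the first `t` variables (in the
order `π`) according to `a`. -/
def subfun {n : ℕ} {V : Type*} (F : (V → Bool) → Bool) (π : Fin n ≃ V)
    (t : ℕ) (a : Fin n → Bool) : (V → Bool) → Bool :=
  fun y => F (fun v => if ((π.symm v : Fin n) : ℕ) < t then a (π.symm v) else y v)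

/-- Variables of `CNF(G)`: one variable `X_u` per vertex `u` and one variable
`X_{u,v}` per edge `{u,v}` of `G`. -/
abbrev CnfVar {V : Type*} (G : SimpleGraph V) := V ⊕ {e // e ∈ G.edgeSet}

/-- The Boolean function of `CNF(G)`: the conjunction over all edges `{u,v}` of
`G` of the clauses `(X_u ∨ X_{u,v} ∨ X_v)`. -/
noncomputable def cnfFun {V : Type*} (G : SimpleGraph V) : (CnfVar G → Bool) → Bool :=
  fun x => @decide
    (∀ e : {e // e ∈ G.edgeSet},
      x (Sum.inr e) = true ∨ ∃ u, u ∈ e.val ∧ x (Sum.inl u) = true)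
    (Classical.propDecidable _)

open Classical in
noncomputable def asgn {V : Type*} (G : SimpleGraph V) {t : ℕ} (f : Fin t → V × V)
    (b : Fin t → Bool) : CnfVar G → Bool := fun c =>
  Sum.elim
    (fun u => if h : ∃ i, (f i).1 = u then b (Classical.choose h) else true)
    (fun e : {e // e ∈ G.edgeSet} =>
      if ∃ i, (e.val : Sym2 V) = s((f i).1, (f i).2) then false else true) c

open Classical in
noncomputable def wtns {V : Type*} (G : SimpleGraph V) {t : ℕ} (f : Fin t → V × V)
    (i : Fin t) : CnfVar G → Bool := fun c =>
  Sum.elim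
    (fun u => if u = (f i).2 then false else true)
    (fun e : {e // e ∈ G.edgeSet} =>
      if (e.val : Sym2 V) = s((f i).1, (f i).2) then false else true) c

lemma asgn_fst {V : Type*} (G : SimpleGraph V) {t : ℕ} {f : Fin t → V × V}
    (hd : ∀ i j : Fin t, i ≠ j → (f i).1 ≠ (f j).1 ∧ (f i).2 ≠ (f j).2)
    (b : Fin t → Bool) (j : Fin t) :
    asgn G f b (Sum.inl (f j).1) = b j := by
  classical
  have h : ∃ i, (f i).1 = (f j).1 := ⟨j, rfl⟩
  have hcj : Classical.choose h = j := by
    by_contra hne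
    exact (hd _ _ hne).1 (Classical.choose_spec h)
  simp only [asgn, Sum.elim_inl]
  rw [dif_pos h, hcj]

lemma core_ne {V : Type*} (G : SimpleGraph V) {n t : ℕ} (π : Fin n ≃ CnfVar G)
    (s : ℕ) (f : Fin t → V × V)
    (hadj : ∀ i, G.Adj (f i).1 (f i).2)
    (hpre : ∀ i, ((π.symm (Sum.inl (f i).1) : Fin n) : ℕ) < s)
    (hpost : ∀ i, ¬ ((π.symm (Sum.inl (f i).2) : Fin n) : ℕ) < s)
    (hd : ∀ i j : Fin t, i ≠ j → (f i).1 ≠ (f j).1 ∧ (f i).2 ≠ (f j).2)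
    (b b' : Fin t → Bool) (i : Fin t) (hb : b i = false) (hb' : b' i = true) :
    subfun (cnfFun G) π s (fun j => asgn G f b (π j)) ≠
      subfun (cnfFun G) π s (fun j => asgn G f b' (π j)) := by
  classical
  intro hEq
  have h1 := congrFun hEq (fun v => wtns G f i v)
  set zb : CnfVar G → Bool := fun v =>
    if ((π.symm v : Fin n) : ℕ) < s then asgn G f b v else wtns G f i v with hzb
  set zb' : CnfVar G → Bool := fun v =>
    if ((π.symm v : Fin n) : ℕ) < s then asgn G f b' v else wtns G f i v with hzb'
  have hL : subfun (cnfFun G) π s (fun j => asgn G f b (π j)) (fun v => wtns G f i v)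
      = cnfFun G zb := by
    simp only [subfun, hzb, Equiv.apply_symm_apply]
  have hR : subfun (cnfFun G) π s (fun j => asgn G f b' (π j)) (fun v => wtns G f i v)
      = cnfFun G zb' := by
    simp only [subfun, hzb', Equiv.apply_symm_apply]
  -- the edge of the i-th matching pair
  have hei : s((f i).1, (f i).2) ∈ G.edgeSet := (SimpleGraph.mem_edgeSet G).mpr (hadj i)
  set ei : {e // e ∈ G.edgeSet} := ⟨s((f i).1, (f i).2), hei⟩ with heidef
  -- left side is false
  have hfalse : cnfFun G zb = false := by
    apply decide_eq_false
    intro hall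
    rcases hall ei with hc | ⟨u, hu, hcu⟩
    · -- edge variable is false in both cases
      have : zb (Sum.inr ei) = false := by
        simp only [hzb]
        by_cases hp : ((π.symm (Sum.inr ei) : Fin n) : ℕ) < s
        · rw [if_pos hp]
          simp only [asgn, Sum.elim_inr]
          rw [if_pos ⟨i, rfl⟩]
        · rw [if_neg hp]
          simp [wtns, heidef]
      rw [this] at hc
      exact Bool.false_ne_true hc
    · rcases Sym2.mem_iff.mp hu with h | h
      · subst h
        have : zb (Sum.inl (f i).1) = false := by
          simp only [hzb]
          rw [if_pos (hpre i), asgn_fst G hd b i, hb]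
        rw [this] at hcu
        exact Bool.false_ne_true hcu
      · subst h
        have : zb (Sum.inl (f i).2) = false := by
          simp only [hzb]
          rw [if_neg (hpost i)]
          simp [wtns]
        rw [this] at hcu
        exact Bool.false_ne_true hcu
  -- right side is true
  have htrue : cnfFun G zb' = true := by
    apply decide_eq_true
    intro e
    by_cases hcase : ∃ j, (e.val : Sym2 V) = s((f j).1, (f j).2)
    · obtain ⟨j, hj⟩ := hcase
      cases hbj : b' j with
      | true =>
        right
        refine ⟨(f j).1, ?_, ?_⟩
        · rw [hj]; exact Sym2.mem_mk_left _ _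
        · simp only [hzb']
          rw [if_pos (hpre j), asgn_fst G hd b' j, hbj]
      | false =>
        have hji : j ≠ i := by
          intro h; rw [h, hb'] at hbj; exact (Bool.false_ne_true hbj.symm)
        right
        refine ⟨(f j).2, ?_, ?_⟩
        · rw [hj]; exact Sym2.mem_mk_right _ _
        · simp only [hzb']
          rw [if_neg (hpost j)]
          simp only [wtns, Sum.elim_inl]
          rw [if_neg (hd j i hji).2]
    · left
      simp only [hzb']
      by_cases hp : ((π.symm (Sum.inr e) : Fin n) : ℕ) < s
      · rw [if_pos hp]
        simp only [asgn, Sum.elim_inr]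
        rw [if_neg hcase]
      · rw [if_neg hp]
        simp only [wtns, Sum.elim_inr]
        rw [if_neg (fun h => hcase ⟨i, h⟩)]
  rw [hL, hR, hfalse, htrue] at h1
  exact Bool.false_ne_true h1

lemma core_inj {V : Type*} (G : SimpleGraph V) {n t : ℕ} (π : Fin n ≃ CnfVar G)
    (s : ℕ) (f : Fin t → V × V)
    (hadj : ∀ i, G.Adj (f i).1 (f i).2)
    (hpre : ∀ i, ((π.symm (Sum.inl (f i).1) : Fin n) : ℕ) < s)
    (hpost : ∀ i, ¬ ((π.symm (Sum.inl (f i).2) : Fin n) : ℕ) < s)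
    (hd : ∀ i j : Fin t, i ≠ j → (f i).1 ≠ (f j).1 ∧ (f i).2 ≠ (f j).2) :
    Function.Injective (fun b : Fin t → Bool =>
      subfun (cnfFun G) π s (fun j => asgn G f b (π j))) := by
  intro b b' h
  funext i
  by_contra hne
  cases hbi : b i with
  | false =>
    have hbi' : b' i = true := by
      cases h' : b' i
      · exact absurd (hbi.trans h'.symm) hne
      · rfl
    exact core_ne G π s f hadj hpre hpost hd b b' i hbi hbi' h
  | true =>
    have hbi' : b' i = false := by
      cases h' : b' i
      · rfl
      · exact absurd (hbi.trans h'.symm) hne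
    exact core_ne G π s f hadj hpre hpost hd b' b i hbi' hbi h.symm

/-- if `G` has matching width `t`, then every permutation of the
variables of `CNF(G)` has a prefix over which the number of distinct
subfunctions is at least `2^t`. -/

theorem stmt13 {V : Type*} [Fintype V] (G : SimpleGraph V) (t : ℕ)
    (ht : matchingWidth G = t) (n : ℕ) (π : Fin n ≃ CnfVar G) :
    ∃ s : ℕ, 2 ^ t ≤ Set.ncard
      {g : (CnfVar G → Bool) → Bool | ∃ a : Fin n → Bool, g = subfun (cnfFun G) π s a} := by
    classical
  -- induced linear order on V from positions of the vertex variables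
  have einj : Function.Injective (fun u : V => (π.symm (Sum.inl u) : Fin n)) := by
    intro u v h
    have := π.symm.injective h
    exact Sum.inl.inj this
  letI : LinearOrder V := LinearOrder.lift' (fun u => π.symm (Sum.inl u)) einj
  let σ : Fin (Fintype.card V) ≃o V := monoEquivOfFin V rfl
  have h1 : matchingWidth G ≤ orderMW G σ.toEquiv := Nat.sInf_le ⟨σ.toEquiv, rfl⟩
  rw [ht] at h1
  set M : Set ℕ := {m | ∃ k, HasCrossMatching G (prefixSet σ.toEquiv k) m} with hMdef
  have hMne : M.Nonempty :=
    ⟨0, 0, Fin.elim0, fun i => i.elim0, fun i _ _ => i.elim0⟩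
  have hMbdd : BddAbove M := by
    refine ⟨Fintype.card V, fun m hm => ?_⟩
    obtain ⟨k, g, hg, hgd⟩ := hm
    have hinj : Function.Injective (fun i : Fin m => (g i).1) := by
      intro i j hij
      by_contra hne
      exact (hgd i j hne).1 hij
    simpa using Fintype.card_le_of_injective _ hinj
  have hts : t ≤ sSup M := h1
  have hmem : sSup M ∈ M := Nat.sSup_mem hMne hMbdd
  obtain ⟨k, g, hg, hgd⟩ := hmem
  set f : Fin t → V × V := fun i => g (Fin.castLE hts i) with hfdef
  have hadj : ∀ i, G.Adj (f i).1 (f i).2 := fun i => (hg _).1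
  have hmemS : ∀ i, (f i).1 ∈ prefixSet σ.toEquiv k := fun i => (hg _).2.1
  have hmemS' : ∀ i, (f i).2 ∉ prefixSet σ.toEquiv k := fun i => (hg _).2.2
  have hd : ∀ i j : Fin t, i ≠ j → (f i).1 ≠ (f j).1 ∧ (f i).2 ≠ (f j).2 := by
    intro i j hij
    exact hgd _ _ (fun h => hij (Fin.castLE_injective hts h))
  -- choose the prefix length s in the order π
  obtain ⟨s, hiff⟩ : ∃ s : ℕ, ∀ u : V,
      u ∈ prefixSet σ.toEquiv k ↔ ((π.symm (Sum.inl u) : Fin n) : ℕ) < s := by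
    by_cases hk : k < Fintype.card V
    · refine ⟨((π.symm (Sum.inl (σ ⟨k, hk⟩)) : Fin n) : ℕ), fun u => ?_⟩
      have e1 : u ∈ prefixSet σ.toEquiv k ↔ σ.toEquiv.symm u < (⟨k, hk⟩ : Fin _) := by
        simp [prefixSet, Fin.lt_def]
      rw [e1]
      have e2 : σ.toEquiv.symm u < (⟨k, hk⟩ : Fin _) ↔ u < σ ⟨k, hk⟩ := by
        constructor
        · intro h
          have := σ.strictMono h
          simpa using this
        · intro h
          have : σ.symm u < σ.symm (σ ⟨k, hk⟩) := σ.symm.strictMono h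
          simpa using this
      rw [e2]
      exact Iff.rfl
    · refine ⟨n, fun u => ?_⟩
      constructor
      · intro _
        exact (π.symm (Sum.inl u)).isLt
      · intro _
        have h2 : ((σ.toEquiv.symm u : Fin (Fintype.card V)) : ℕ) < Fintype.card V :=
          (σ.toEquiv.symm u).isLt
        exact lt_of_lt_of_le h2 (not_lt.mp hk)
  have hpre : ∀ i, ((π.symm (Sum.inl (f i).1) : Fin n) : ℕ) < s :=
    fun i => (hiff _).mp (hmemS i)
  have hpost : ∀ i, ¬ ((π.symm (Sum.inl (f i).2) : Fin n) : ℕ) < s :=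
    fun i h => hmemS' i ((hiff _).mpr h)
  refine ⟨s, ?_⟩
  have hinj := core_inj G π s f hadj hpre hpost hd
  have hsubset : Set.range (fun b : Fin t → Bool =>
      subfun (cnfFun G) π s (fun j => asgn G f b (π j)))
      ⊆ {g : (CnfVar G → Bool) → Bool | ∃ a : Fin n → Bool, g = subfun (cnfFun G) π s a} := by
    rintro x ⟨b, rfl⟩
    exact ⟨fun j => asgn G f b (π j), rfl⟩
  have hfin : {g : (CnfVar G → Bool) → Bool |
      ∃ a : Fin n → Bool, g = subfun (cnfFun G) π s a}.Finite := by
    have heq : {g : (CnfVar G → Bool) → Bool | ∃ a : Fin n → Bool, g = subfun (cnfFun G) π s a}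
        = Set.range (fun a : Fin n → Bool => subfun (cnfFun G) π s a) := by
      ext x
      constructor
      · rintro ⟨a, rfl⟩; exact ⟨a, rfl⟩
      · rintro ⟨a, rfl⟩; exact ⟨a, rfl⟩
    rw [heq]
    exact Set.finite_range _
  have hcard : (Set.range (fun b : Fin t → Bool =>
      subfun (cnfFun G) π s (fun j => asgn G f b (π j)))).ncard = 2 ^ t := by
    rw [← Nat.card_coe_set_eq, Nat.card_range_of_injective hinj,
      Nat.card_eq_fintype_card]
    simp
  calc 2 ^ t = _ := hcard.symm
    _ ≤ _ := Set.ncard_le_ncard hsubset hfin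
end

section
/- (Prefix-subfunction bound from path decompositions of incidence graphs.) Let F be a CNF whose incidence graph has a path decomposition (P, B) of width p, with bags B(v_1),...,B(v_r) along P. For each variable X let f(X) be the least j with X ∈ B(v_j), and let π be any ordering of the variables such that f(X) < f(Y) implies X precedes Y. Then for every prefix π_1 of π, the number of distinct subfunctions F_S over assignments S to π_1 is at most 1 + 2^{p+1}. -/
/- A CNF with clause set `ι` and variable set `ν` is modelled as
`occ : ι → ν → Option Bool`: `occ c v = some b` means that variable `v` occurs
in clause `c` with polarity `b`. -/

/-- The incidence graph of the CNF `occ`: variable vertices and clause vertices,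
with a variable adjacent to a clause iff it occurs in it. -/
def incGraph {ν ι : Type*} (occ : ι → ν → Option Bool) : SimpleGraph (ν ⊕ ι) :=
  SimpleGraph.fromRel (fun a b =>
    match a, b with
    | Sum.inl v, Sum.inr c => (occ c v).isSome
    | _, _ => False)

/-- The Boolean function of the CNF `occ`: every clause contains a literal made
true by the assignment. -/
noncomputable def cnfEval {ν ι : Type*} (occ : ι → ν → Option Bool) :
    (ν → Bool) → Bool :=
  fun x => @decide (∀ c : ι, ∃ v b, occ c v = some b ∧ x v = b)
    (Classical.propDecidable _)

/-- A path decomposition of `G` with bags `B 0, ..., B (rr-1)` in path order: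
every vertex is in some bag, every edge is inside some bag, and the bags
containing any fixed vertex form a contiguous interval. -/
def IsPathDecomp {X : Type*} (G : SimpleGraph X) (rr : ℕ)
    (B : Fin rr → Finset X) : Prop :=
  (∀ w, ∃ j, w ∈ B j) ∧
  (∀ a b, G.Adj a b → ∃ j, a ∈ B j ∧ b ∈ B j) ∧
  (∀ w (j₁ j₂ j₃ : Fin rr), j₁ ≤ j₂ → j₂ ≤ j₃ → w ∈ B j₁ → w ∈ B j₃ → w ∈ B j₂)

lemma ncard_le_card_of_subset_range {α β : Type*} [Fintype α] (ψ : α → β) (S : Set β)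
    (h : S ⊆ Set.range ψ) : S.ncard ≤ Fintype.card α := by
  classical
  have h1 : S.ncard ≤ (Set.range ψ).ncard := Set.ncard_le_ncard h (Set.finite_range ψ)
  have h2 : (Set.range ψ).ncard ≤ (Set.univ : Set α).ncard := by
    rw [← Set.image_univ]
    exact Set.ncard_image_le Set.finite_univ
  simpa [Set.ncard_univ, Nat.card_eq_fintype_card] using h1.trans h2

/-- prefix-subfunction bound from path decompositions of incidence
graphs.  If the incidence graph of `occ` has a path decomposition of width `p`,
`f X` is the first bag containing variable `X`, and the variables are ordered
compatibly with `f`, then every prefix yields at most `1 + 2^{p+1}` distinct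
subfunctions. -/
theorem stmt17 {ν ι : Type*} [Fintype ν] [Fintype ι]
    (occ : ι → ν → Option Bool) (p rr : ℕ) (B : Fin rr → Finset (ν ⊕ ι))
    (hpd : IsPathDecomp (incGraph occ) rr B)
    (hwidth : ∀ j, (B j).card ≤ p + 1)
    (f : ν → Fin rr)
    (hf : ∀ X : ν, (Sum.inl X : ν ⊕ ι) ∈ B (f X) ∧
      ∀ j, (Sum.inl X : ν ⊕ ι) ∈ B j → f X ≤ j)
    (n : ℕ) (σ : Fin n ≃ ν)
    (hσ : ∀ i i' : Fin n, f (σ i) < f (σ i') → i < i')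
    (t : ℕ) :
    Set.ncard {g : (ν → Bool) → Bool | ∃ a : Fin n → Bool, g = subfun (cnfEval occ) σ t a}
      ≤ 1 + 2 ^ (p + 1) := by
  classical
  have h2le : (2 : ℕ) ≤ 2 ^ (p + 1) := by
    calc (2:ℕ) = 2 ^ 1 := rfl
    _ ≤ 2 ^ (p + 1) := Nat.pow_le_pow_right (by norm_num) (by omega)
  rcases le_or_gt n t with hnt | htn
  · -- trivial case: all variables are in the prefix, so every subfunction is constant
    have hconst : ∀ a : Fin n → Bool, subfun (cnfEval occ) σ t a =
        (fun _ => cnfEval occ (fun v => a (σ.symm v))) := by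
      intro a; funext y
      unfold subfun
      congr 1; funext v
      rw [if_pos (lt_of_lt_of_le (σ.symm v).isLt hnt)]
    have hsub : {g : (ν → Bool) → Bool | ∃ a : Fin n → Bool,
        g = subfun (cnfEval occ) σ t a} ⊆
        Set.range (fun b : Bool => (fun _ : ν → Bool => b)) := by
      rintro g ⟨a, rfl⟩
      exact ⟨cnfEval occ (fun v => a (σ.symm v)), (hconst a).symm⟩
    have := ncard_le_card_of_subset_range _ _ hsub
    simp only [Fintype.card_bool] at this
    omega
  · -- main case
    set τ : Fin n := ⟨t, htn⟩ with hτ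
    set j : Fin rr := f (σ τ) with hj
    have hmono : ∀ i i' : Fin n, i ≤ i' → f (σ i) ≤ f (σ i') := by
      intro i i' h
      by_contra hc
      push_neg at hc
      exact absurd (hσ i' i hc) (not_lt.mpr h)
    have hpre : ∀ v : ν, ((σ.symm v : Fin n) : ℕ) < t → f v ≤ j := by
      intro v hv
      have : f (σ (σ.symm v)) ≤ f (σ τ) := hmono _ _ (by rw [Fin.le_def]; exact hv.le)
      simpa using this
    have hsuf : ∀ v : ν, ¬ (((σ.symm v : Fin n) : ℕ) < t) → j ≤ f v := by
      intro v hv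
      have : f (σ τ) ≤ f (σ (σ.symm v)) := hmono _ _ (by rw [Fin.le_def]; exact not_lt.mp hv)
      simpa using this
    have hadj : ∀ (c : ι) (v : ν) (b : Bool), occ c v = some b →
        (incGraph occ).Adj (Sum.inl v) (Sum.inr c) := by
      intro c v b hb
      rw [incGraph, SimpleGraph.fromRel_adj]
      refine ⟨by simp, Or.inl ?_⟩
      simp [hb]
    have keyA : ∀ (c : ι) (X Y : ν) (bX bY : Bool), occ c X = some bX →
        occ c Y = some bY → ((σ.symm X : Fin n) : ℕ) < t →
        ¬ (((σ.symm Y : Fin n) : ℕ) < t) → (Sum.inr c : ν ⊕ ι) ∉ B j →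
        (Sum.inl X : ν ⊕ ι) ∈ B j := by
      intro c X Y bX bY hX hY hXp hYs hc
      obtain ⟨j1, hX1, hc1⟩ := hpd.2.1 _ _ (hadj c X bX hX)
      obtain ⟨j2, hY2, hc2⟩ := hpd.2.1 _ _ (hadj c Y bY hY)
      have hj2 : j ≤ j2 := le_trans (hsuf Y hYs) ((hf Y).2 _ hY2)
      have hj1 : j ≤ j1 := by
        by_contra h
        push_neg at h
        exact hc (hpd.2.2 _ j1 j j2 h.le hj2 hc1 hc2)
      exact hpd.2.2 _ (f X) j j1 (hpre X hXp) hj1 (hf X).1 hX1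
    set sat : (Fin n → Bool) → ι → Prop := fun a c =>
      ∃ v : ν, ((σ.symm v : Fin n) : ℕ) < t ∧ occ c v = some (a (σ.symm v)) with hsatdef
    set bad : (Fin n → Bool) → Prop := fun a =>
      ∃ c : ι, (∀ v b, occ c v = some b → ((σ.symm v : Fin n) : ℕ) < t) ∧ ¬ sat a c
      with hbaddef
    set Φ : (Fin n → Bool) → Option (↥(B j) → Bool) := fun a =>
      if bad a then none else
        some (fun w => Sum.elim
          (fun X => if ((σ.symm X : Fin n) : ℕ) < t then a (σ.symm X) else false)
          (fun c => decide (sat a c)) w.1) with hΦdef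
    -- a bad assignment gives the constant-false subfunction
    have hbadconst : ∀ a : Fin n → Bool, bad a →
        subfun (cnfEval occ) σ t a = (fun _ => false) := by
      intro a ⟨c, hall, hns⟩
      funext y
      unfold subfun cnfEval
      simp only [decide_eq_false_iff_not]
      intro hforall
      obtain ⟨v, b, hv, hxb⟩ := hforall c
      have hp := hall v b hv
      simp only [if_pos hp] at hxb
      exact hns ⟨v, hp, by rw [hxb]; exact hv⟩
    have keyB : ∀ a a' : Fin n → Bool, Φ a = Φ a' →
        subfun (cnfEval occ) σ t a = subfun (cnfEval occ) σ t a' := by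
      intro a a' h
      by_cases hb : bad a
      · have hb' : bad a' := by
          by_contra hb'
          simp only [hΦdef, if_pos hb, if_neg hb'] at h
          exact (Option.some_ne_none _ h.symm).elim
        rw [hbadconst a hb, hbadconst a' hb']
      · have hb' : ¬ bad a' := by
          intro hb'
          simp only [hΦdef, if_neg hb, if_pos hb'] at h
          exact (Option.some_ne_none _ h).elim
        have hfun : (fun w : ↥(B j) => Sum.elim
              (fun X => if ((σ.symm X : Fin n) : ℕ) < t then a (σ.symm X) else false)
              (fun c => decide (sat a c)) w.1)
            = (fun w : ↥(B j) => Sum.elim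
              (fun X => if ((σ.symm X : Fin n) : ℕ) < t then a' (σ.symm X) else false)
              (fun c => decide (sat a' c)) w.1) := by
          simp only [hΦdef, if_neg hb, if_neg hb', Option.some.injEq] at h
          exact h
        -- all-prefix clauses are satisfied under both
        have hallsat : ∀ c : ι,
            (∀ v b, occ c v = some b → ((σ.symm v : Fin n) : ℕ) < t) →
            sat a c ∧ sat a' c := by
          intro c hc
          simp only [hbaddef] at hb hb'
          push_neg at hb hb'
          exact ⟨hb c hc, hb' c hc⟩
        -- crossing clauses have equal satisfaction bits
        have hsat : ∀ c : ι,
            (∃ (Y : ν) (bY : Bool), occ c Y = some bY ∧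
              ¬ (((σ.symm Y : Fin n) : ℕ) < t)) → (sat a c ↔ sat a' c) := by
          rintro c ⟨Y, bY, hY, hYs⟩
          by_cases hcB : (Sum.inr c : ν ⊕ ι) ∈ B j
          · have := congrFun hfun ⟨Sum.inr c, hcB⟩
            simp only [Sum.elim_inr] at this
            exact decide_eq_decide.mp this
          · constructor
            · rintro ⟨v, hvp, hv⟩
              have hvB := keyA c v Y _ bY hv hY hvp hYs hcB
              have hval := congrFun hfun ⟨Sum.inl v, hvB⟩
              simp only [Sum.elim_inl, if_pos hvp] at hval
              exact ⟨v, hvp, by rw [← hval]; exact hv⟩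
            · rintro ⟨v, hvp, hv⟩
              have hvB := keyA c v Y _ bY hv hY hvp hYs hcB
              have hval := congrFun hfun ⟨Sum.inl v, hvB⟩
              simp only [Sum.elim_inl, if_pos hvp] at hval
              exact ⟨v, hvp, by rw [hval]; exact hv⟩
        funext y
        unfold subfun cnfEval
        simp only [decide_eq_decide]
        have hsplit : ∀ (aa : Fin n → Bool) (c : ι),
            (∃ v b, occ c v = some b ∧
              (if ((σ.symm v : Fin n) : ℕ) < t then aa (σ.symm v) else y v) = b) ↔
            (sat aa c ∨ ∃ (v : ν) (b : Bool), ¬ (((σ.symm v : Fin n) : ℕ) < t) ∧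
              occ c v = some b ∧ y v = b) := by
          intro aa c
          constructor
          · rintro ⟨v, b, hv, hb⟩
            by_cases hp : ((σ.symm v : Fin n) : ℕ) < t
            · rw [if_pos hp] at hb
              exact Or.inl ⟨v, hp, by rw [hb]; exact hv⟩
            · rw [if_neg hp] at hb
              exact Or.inr ⟨v, b, hp, hv, hb⟩
          · rintro (⟨v, hp, hv⟩ | ⟨v, b, hp, hv, hb⟩)
            · exact ⟨v, aa (σ.symm v), hv, if_pos hp⟩
            · exact ⟨v, b, hv, by rw [if_neg hp]; exact hb⟩
        have hclause : ∀ c : ι, sat a c ∨ (∃ (v : ν) (b : Bool),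
              ¬ (((σ.symm v : Fin n) : ℕ) < t) ∧ occ c v = some b ∧ y v = b) ↔
            (sat a' c ∨ ∃ (v : ν) (b : Bool),
              ¬ (((σ.symm v : Fin n) : ℕ) < t) ∧ occ c v = some b ∧ y v = b) := by
          intro c
          by_cases hsc : ∃ (Y : ν) (bY : Bool), occ c Y = some bY ∧
              ¬ (((σ.symm Y : Fin n) : ℕ) < t)
          · rw [hsat c hsc]
          · have hc : ∀ v b, occ c v = some b → ((σ.symm v : Fin n) : ℕ) < t := by
              push_neg at hsc
              intro v b hv
              by_contra hp
              exact hp (hsc v b hv)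
            obtain ⟨h1, h2⟩ := hallsat c hc
            simp [h1, h2]
        constructor
        · intro H c
          rw [hsplit a']
          rw [← hclause c]
          rw [← hsplit a]
          exact H c
        · intro H c
          rw [hsplit a]
          rw [hclause c]
          rw [← hsplit a']
          exact H c
    -- wrap up via the encoding map
    set Ψ : Option (↥(B j) → Bool) → ((ν → Bool) → Bool) := fun o =>
      if h : ∃ a, Φ a = o then subfun (cnfEval occ) σ t (Classical.choose h)
      else (fun _ => false) with hΨdef
    have hsub : {g : (ν → Bool) → Bool | ∃ a : Fin n → Bool,
        g = subfun (cnfEval occ) σ t a} ⊆ Set.range Ψ := by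
      rintro g ⟨a, rfl⟩
      refine ⟨Φ a, ?_⟩
      have hex : ∃ a', Φ a' = Φ a := ⟨a, rfl⟩
      rw [hΨdef]
      simp only [dif_pos hex]
      exact keyB _ _ (Classical.choose_spec hex)
    have hle := ncard_le_card_of_subset_range _ _ hsub
    have hcard : Fintype.card (Option (↥(B j) → Bool))
        = 2 ^ (B j).card + 1 := by
      rw [Fintype.card_option, Fintype.card_fun, Fintype.card_bool, Fintype.card_coe]
    have hpow : (2:ℕ) ^ (B j).card ≤ 2 ^ (p + 1) :=
      Nat.pow_le_pow_right (by norm_num) (hwidth j)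
    omega
end

section
/- Let F be a CNF with n variables whose incidence graph has pathwidth p. Then F can be computed by an OBDD of size O(2^p · n). Consequently, since pathwidth is O(k·log n) for treewidth k, a CNF with n variables whose incidence graph has treewidth k can be computed by an OBDD of size n^{O(k)}. -/
/-- `(T, bag)` is a tree decomposition of `G`: `T` is a tree, every vertex is in
some bag, every edge is inside some bag, and the bags containing any fixed
vertex induce a connected subgraph of `T`. -/
def IsTreeDecomp {V ι : Type*} (G : SimpleGraph V) (T : SimpleGraph ι)
    (bag : ι → Finset V) : Prop :=
  T.IsTree ∧
  (∀ v, ∃ i, v ∈ bag i) ∧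
  (∀ u v, G.Adj u v → ∃ i, u ∈ bag i ∧ v ∈ bag i) ∧
  (∀ v, (SimpleGraph.induce {i | v ∈ bag i} T).Connected)


section LemmaA
variable {n : ℕ} (F : (Fin n → Bool) → Bool) (π : Fin n ≃ Fin n)

lemma subfun_zero (a : Fin n → Bool) (y : Fin n → Bool) : subfun F π 0 a y = F y := by
  unfold subfun; congr 1

lemma subfun_ge {t : ℕ} (ht : n ≤ t) (a y y' : Fin n → Bool) :
    subfun F π t a y = subfun F π t a y' := by
  unfold subfun; congr 1; funext v
  have h : ((π.symm v : Fin n) : ℕ) < t := lt_of_lt_of_le (π.symm v).isLt ht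
  simp [h]

lemma subfun_depends {t : ℕ} (a a' : Fin n → Bool)
    (h : ∀ i : Fin n, (i : ℕ) < t → a i = a' i) :
    subfun F π t a = subfun F π t a' := by
  funext y; unfold subfun; congr 1; funext v
  by_cases hv : ((π.symm v : Fin n) : ℕ) < t
  · simp only [if_pos hv]; exact h _ hv
  · simp [hv]

lemma subfun_succ (t : ℕ) (ht : t < n) (a y : Fin n → Bool)
    (hy : a ⟨t, ht⟩ = y (π ⟨t, ht⟩)) :
    subfun F π (t+1) a y = subfun F π t a y := by
  unfold subfun; congr 1; funext v
  rcases lt_trichotomy ((π.symm v : Fin n) : ℕ) t with h | h | h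
  · simp [h, Nat.lt_succ_of_lt h]
  · have hv : π.symm v = ⟨t, ht⟩ := Fin.ext h
    have hvv : v = π ⟨t, ht⟩ := by rw [← hv]; simp
    have h1 : ((π.symm v : Fin n) : ℕ) < t + 1 := by omega
    have h2 : ¬ ((π.symm v : Fin n) : ℕ) < t := by omega
    rw [if_pos h1, if_neg h2, hv, hy, hvv]
  · have h1 : ¬ ((π.symm v : Fin n) : ℕ) < t + 1 := by omega
    have h2 : ¬ ((π.symm v : Fin n) : ℕ) < t := by omega
    simp [h1, h2]

end LemmaA

open Finset in
theorem obdd_of_subfun_bound {n : ℕ} (F : (Fin n → Bool) → Bool) (π : Fin n ≃ Fin n)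
    (m : ℕ) (hm : 0 < m)
    (hb : ∀ t : ℕ, (Finset.image (subfun F π t) Finset.univ).card ≤ m) :
    ∃ D : OBDD n, D.Computes F π ∧ D.size = (n+1) * m := by
  classical
  -- code functions
  have hinj : ∀ t : ℕ, ∃ code : (Fin n → Bool) → Fin m,
      ∀ a a', code a = code a' → subfun F π t a = subfun F π t a' := by
    intro t
    have hcard : Fintype.card {x // x ∈ Finset.image (subfun F π t) Finset.univ}
        ≤ Fintype.card (Fin m) := by
      rw [Fintype.card_coe, Fintype.card_fin]; exact hb t
    obtain ⟨emb⟩ := Function.Embedding.nonempty_of_card_le hcard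
    refine ⟨fun a => emb ⟨subfun F π t a, Finset.mem_image_of_mem _ (Finset.mem_univ a)⟩, ?_⟩
    intro a a' h
    exact congrArg Subtype.val (emb.injective h)
  choose code hcode using hinj
  have hsec0 : ∀ (t : ℕ) (r : Fin m), ∃ a : Fin n → Bool,
      (∃ a₀, code t a₀ = r) → code t a = r := by
    intro t r
    by_cases h : ∃ a₀, code t a₀ = r
    · exact ⟨h.choose, fun _ => h.choose_spec⟩
    · exact ⟨fun _ => false, fun hh => absurd hh h⟩
  choose sec hsecspec using hsec0
  have hsec : ∀ (t : ℕ) (a : Fin n → Bool),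
      subfun F π t (sec t (code t a)) = subfun F π t a := fun t a =>
    hcode t _ _ (hsecspec t (code t a) ⟨a, rfl⟩)
  -- the OBDD
  let e : Fin (n+1) × Fin m ≃ Fin ((n+1) * m) := finProdFinEquiv
  let val : Fin m → Bool := fun r => subfun F π n (sec n r) (fun _ => false)
  let lab : Fin ((n+1)*m) → Fin n ⊕ Bool := fun u =>
    if h : ((e.symm u).1 : ℕ) < n then Sum.inl ⟨(e.symm u).1, h⟩
    else Sum.inr (val (e.symm u).2)
  let tr : Bool → Fin ((n+1)*m) → Fin ((n+1)*m) := fun b u =>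
    if h : ((e.symm u).1 : ℕ) < n then
      e (⟨((e.symm u).1 : ℕ) + 1, by omega⟩,
         code (((e.symm u).1 : ℕ) + 1)
           (Function.update (sec ((e.symm u).1 : ℕ) (e.symm u).2) ⟨(e.symm u).1, h⟩ b))
    else u
  have hm' : 0 < (n+1) * m := by positivity
  have hinc : ∀ (u : Fin ((n+1)*m)) (i : Fin n), lab u = Sum.inl i →
      ∀ (b : Bool) (j : Fin n), lab (tr b u) = Sum.inl j → i < j := by
    intro u i hi b j hj
    simp only [lab, tr] at hi hj
    split at hi
    case isFalse h => exact absurd hi (by simp)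
    case isTrue h =>
      rw [Sum.inl.injEq] at hi
      rw [dif_pos h] at hj
      rw [Equiv.symm_apply_apply] at hj
      dsimp only at hj
      split at hj
      case isFalse h2 => exact absurd hj (by simp)
      case isTrue h2 =>
        rw [Sum.inl.injEq] at hj
        rw [← hi, ← hj]
        exact Fin.mk_lt_mk.mpr (by omega)
  let D : OBDD n := ⟨(n+1)*m, e (⟨0, by omega⟩, code 0 (fun _ => false)), lab, tr false, tr true,
    fun u i hi => ⟨fun j hj => hinc u i hi false j hj, fun j hj => hinc u i hi true j hj⟩⟩
  have hlab : ∀ u, D.label u = lab u := fun _ => rfl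
  have main : ∀ (s t : ℕ) (hts : t ≤ n), n - t ≤ s → ∀ (r : Fin m) (x : Fin n → Bool),
      D.evalAux (s+1) (e (⟨t, by omega⟩, r)) x
        = subfun F π t (sec t r) (fun v => x (π.symm v)) := by
    intro s
    induction s with
    | zero =>
      intro t hts hs r x
      have htn : t = n := by omega
      subst htn
      simp only [OBDD.evalAux, hlab, lab, Equiv.symm_apply_apply]
      rw [dif_neg (by omega)]
      exact subfun_ge F π le_rfl _ _ _
    | succ s ih =>
      intro t hts hs r x
      by_cases h : t < n
      · have step : D.evalAux (s+1+1) (e (⟨t, by omega⟩, r)) x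
            = D.evalAux (s+1) (tr (x ⟨t, h⟩) (e (⟨t, by omega⟩, r))) x := by
          simp only [OBDD.evalAux, hlab, lab, Equiv.symm_apply_apply]
          rw [dif_pos h]
          cases hx : x ⟨t, h⟩ <;> simp [hx, D, tr]
        rw [step]
        simp only [tr, Equiv.symm_apply_apply]
        rw [dif_pos h]
        rw [ih (t+1) (by omega) (by omega)]
        set b := x ⟨t, h⟩
        set a' := Function.update (sec t r) ⟨t, h⟩ b with ha'
        rw [hsec]
        have h1 : subfun F π (t+1) a' (fun v => x (π.symm v))
            = subfun F π t a' (fun v => x (π.symm v)) := by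
          apply subfun_succ F π t h
          simp [a', b, Equiv.symm_apply_apply]
        rw [h1]
        have h2 : subfun F π t a' = subfun F π t (sec t r) := by
          apply subfun_depends
          intro i hi
          have : i ≠ ⟨t, h⟩ := by intro hh; subst hh; simp at hi
          simp [a', Function.update_of_ne this]
        rw [h2]
      · have htn : t = n := by omega
        subst htn
        simp only [OBDD.evalAux, hlab, lab, Equiv.symm_apply_apply]
        rw [dif_neg (by omega)]
        exact subfun_ge F π le_rfl _ _ _
  refine ⟨D, ?_, rfl⟩
  intro x
  have := main n 0 (by omega) (by omega) (code 0 (fun _ => false)) (fun i => x (π i))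
  have hroot : D.eval (fun i => x (π i))
      = D.evalAux (n+1) (e (⟨0, by omega⟩, code 0 (fun _ => false))) (fun i => x (π i)) := rfl
  rw [hroot, this, subfun_zero]
  congr 1
  funext v
  rw [Equiv.apply_symm_apply]

section LemmaB

open Finset

lemma card_image_le_of_factor {α β γ : Type*} [Fintype α] [Nonempty α]
    [DecidableEq β] [DecidableEq γ] (f : α → β) (g : α → γ)
    (h : ∀ a a', g a = g a' → f a = f a') :
    (Finset.image f Finset.univ).card ≤ (Finset.image g Finset.univ).card := by
  classical
  have hne : Nonempty β := ⟨f (Classical.arbitrary α)⟩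
  set h' : γ → β := fun c => if hc : ∃ a, g a = c then f hc.choose else Classical.arbitrary β
    with hh'
  have hsub : Finset.image f Finset.univ ⊆ Finset.image h' (Finset.image g Finset.univ) := by
    intro b hb
    obtain ⟨a, -, rfl⟩ := Finset.mem_image.mp hb
    refine Finset.mem_image.mpr ⟨g a, Finset.mem_image_of_mem _ (Finset.mem_univ a), ?_⟩
    have hc : ∃ a', g a' = g a := ⟨a, rfl⟩
    rw [hh']
    simp only [dif_pos hc]
    exact h _ _ hc.choose_spec
  calc (Finset.image f Finset.univ).card
      ≤ (Finset.image h' (Finset.image g Finset.univ)).card := Finset.card_le_card hsub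
    _ ≤ (Finset.image g Finset.univ).card := Finset.card_image_le

lemma incAdj {nv nc : ℕ} (occ : Fin nc → Fin nv → Option Bool) {v : Fin nv} {c : Fin nc}
    (h : occ c v ≠ none) : (incGraph occ).Adj (Sum.inl v) (Sum.inr c) := by
  rw [incGraph, SimpleGraph.fromRel_adj]
  refine ⟨by simp, Or.inl ?_⟩
  simpa [Option.isSome_iff_ne_none] using h

theorem subfun_bound_of_pathdecomp {nv nc p rr : ℕ} (occ : Fin nc → Fin nv → Option Bool)
    (B : Fin rr → Finset (Fin nv ⊕ Fin nc))
    (hPD : IsPathDecomp (incGraph occ) rr B) (hw : ∀ j, (B j).card ≤ p + 1) :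
    ∃ π : Fin nv ≃ Fin nv, ∀ t : ℕ,
      (Finset.image (subfun (cnfEval occ) π t) Finset.univ).card ≤ 2 ^ (p + 2) := by
  classical
  obtain ⟨hcov, hedge, hconv⟩ := hPD
  have hne : ∀ v : Fin nv, (Finset.univ.filter (fun j => Sum.inl v ∈ B j)).Nonempty := by
    intro v
    obtain ⟨j, hj⟩ := hcov (Sum.inl v)
    exact ⟨j, by simp [hj]⟩
  set fb : Fin nv → Fin rr := fun v => (Finset.univ.filter (fun j => Sum.inl v ∈ B j)).min' (hne v)
    with hfb
  have fb_mem : ∀ v, Sum.inl v ∈ B (fb v) := by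
    intro v
    have := Finset.min'_mem _ (hne v)
    simpa using this
  have fb_min : ∀ v j, Sum.inl v ∈ B j → fb v ≤ j := by
    intro v j hj
    exact Finset.min'_le _ _ (by simp [hj])
  set π : Fin nv ≃ Fin nv := (Tuple.sort fb : Equiv.Perm (Fin nv)) with hπ
  have hmono : Monotone (fb ∘ π) := Tuple.monotone_sort fb
  refine ⟨π, ?_⟩
  intro t
  set F := cnfEval occ with hF
  by_cases htn : nv ≤ t
  · -- all variables fixed: at most two (constant) subfunctions
    have hconst : ∀ a : Fin nv → Bool,
        subfun F π t a ∈ ({(fun _ => true), (fun _ => false)} :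
          Finset ((Fin nv → Bool) → Bool)) := by
      intro a
      have : subfun F π t a = fun _ => subfun F π t a (fun _ => false) := by
        funext y; exact subfun_ge F π htn a y _
      rw [this]
      cases subfun F π t a (fun _ => false) <;> simp
    have hsub : Finset.image (subfun F π t) Finset.univ ⊆
        ({(fun _ => true), (fun _ => false)} : Finset ((Fin nv → Bool) → Bool)) := by
      intro g hg
      obtain ⟨a, -, rfl⟩ := Finset.mem_image.mp hg
      exact hconst a
    calc (Finset.image (subfun F π t) Finset.univ).card
        ≤ _ := Finset.card_le_card hsub
      _ ≤ 2 := Finset.card_insert_le _ _ |>.trans (by simp)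
      _ ≤ 2 ^ (p + 2) := by
          have : (2:ℕ) ^ 1 ≤ 2 ^ (p+2) := Nat.pow_le_pow_right (by norm_num) (by omega)
          simpa using this
  · push_neg at htn
    set jt : Fin rr := fb (π ⟨t, htn⟩) with hjt
    set Past : Fin nv → Prop := fun v => ((π.symm v : Fin nv) : ℕ) < t with hPast
    set SatA : Fin nc → (Fin nv → Bool) → Prop :=
      fun c a => ∃ v, Past v ∧ occ c v = some (a (π.symm v)) with hSatA
    set Fin' : Fin nc → Prop := fun c => ∀ v, occ c v ≠ none → Past v with hFin'
    set Φ : (Fin nv → Bool) → Bool × Finset (Fin nv ⊕ Fin nc) := fun a =>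
      (decide (∀ c, Fin' c → SatA c a),
        (B jt).filter (fun x => match x with
          | Sum.inl v => Past v ∧ a (π.symm v) = true
          | Sum.inr c => (¬ Fin' c) ∧ SatA c a)) with hΦ
    -- ordering facts
    have hPastle : ∀ v, Past v → fb v ≤ jt := by
      intro v hv
      have : fb (π (π.symm v)) ≤ fb (π ⟨t, htn⟩) := hmono (by
        show (π.symm v) ≤ ⟨t, htn⟩
        exact Fin.mk_le_mk.mpr (le_of_lt hv) |>.trans_eq' rfl)
      simpa using this
    have hFutle : ∀ v, ¬ Past v → jt ≤ fb v := by
      intro v hv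
      have hle : (⟨t, htn⟩ : Fin nv) ≤ π.symm v := by
        simp only [hPast, not_lt] at hv
        exact Fin.mk_le_mk.mpr hv |>.trans_eq' rfl
      have : fb (π ⟨t, htn⟩) ≤ fb (π (π.symm v)) := hmono hle
      simpa using this
    have hedge' : ∀ (c : Fin nc) (v : Fin nv), occ c v ≠ none →
        ∃ j, Sum.inl v ∈ B j ∧ Sum.inr c ∈ B j := by
      intro c v h
      exact hedge _ _ (incAdj occ h)
    -- the key geometric claim
    have hkey : ∀ c : Fin nc, (∃ w, ¬ Past w ∧ occ c w ≠ none) → Sum.inr c ∉ B jt →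
        ∀ v, Past v → occ c v ≠ none → Sum.inl v ∈ B jt := by
      intro c ⟨w, hw, hwocc⟩ hcnot v hv hvocc
      obtain ⟨j₂, hwj₂, hcj₂⟩ := hedge' c w hwocc
      obtain ⟨j₁, hvj₁, hcj₁⟩ := hedge' c v hvocc
      have hj₂ : jt ≤ j₂ := le_trans (hFutle w hw) (fb_min w j₂ hwj₂)
      by_cases hj₁ : j₁ ≤ jt
      · exact absurd (hconv (Sum.inr c) j₁ jt j₂ hj₁ hj₂ hcj₁ hcj₂) hcnot
      · push_neg at hj₁
        exact hconv (Sum.inl v) (fb v) jt j₁ (hPastle v hv) (le_of_lt hj₁) (fb_mem v) hvj₁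
    -- determinism of Φ
    have hdet : ∀ a a', Φ a = Φ a' → subfun F π t a = subfun F π t a' := by
      have aux : ∀ a a', Φ a = Φ a' → ∀ y : Fin nv → Bool,
          (∀ c : Fin nc, ∃ v b, occ c v = some b ∧
            (if ((π.symm v : Fin nv) : ℕ) < t then a (π.symm v) else y v) = b) →
          (∀ c : Fin nc, ∃ v b, occ c v = some b ∧
            (if ((π.symm v : Fin nv) : ℕ) < t then a' (π.symm v) else y v) = b) := by
        intro a a' hΦeq y hP c
        have hbit : (∀ c, Fin' c → SatA c a) ↔ (∀ c, Fin' c → SatA c a') := by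
          have := congrArg Prod.fst hΦeq
          simpa only [hΦ] using decide_eq_decide.mp this
        have hset := congrArg Prod.snd hΦeq
        simp only [hΦ] at hset
        have hsetmem : ∀ x, (x ∈ (B jt).filter (fun x => match x with
            | Sum.inl v => Past v ∧ a (π.symm v) = true
            | Sum.inr c => (¬ Fin' c) ∧ SatA c a)) ↔ (x ∈ (B jt).filter (fun x => match x with
            | Sum.inl v => Past v ∧ a' (π.symm v) = true
            | Sum.inr c => (¬ Fin' c) ∧ SatA c a')) := fun x => by rw [hset]
        -- `P a` implies every finished clause is already satisfied
        have hfinsat : ∀ c, Fin' c → SatA c a := by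
          intro c hc
          obtain ⟨v, b, hocc, hmix⟩ := hP c
          have hv : Past v := hc v (by rw [hocc]; exact Option.some_ne_none b)
          refine ⟨v, hv, ?_⟩
          rw [hocc]
          rw [if_pos hv] at hmix
          rw [hmix]
        -- transfer of SatA for clauses:
        have hSatAtrans : ∀ c, ¬ Fin' c → SatA c a → SatA c a' := by
          intro c hnf hsa
          by_cases hcmem : Sum.inr c ∈ B jt
          · have h1 : Sum.inr c ∈ (B jt).filter (fun x => match x with
              | Sum.inl v => Past v ∧ a (π.symm v) = true
              | Sum.inr c => (¬ Fin' c) ∧ SatA c a) := by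
              rw [Finset.mem_filter]; exact ⟨hcmem, ⟨hnf, hsa⟩⟩
            have h2 := (hsetmem (Sum.inr c)).mp h1
            rw [Finset.mem_filter] at h2
            exact h2.2.2
          · -- all past variables of c are in the bag jt, so their a-values transfer
            obtain ⟨v, hv, hvocc⟩ := hsa
            have hvocc' : occ c v ≠ none := by rw [hvocc]; exact Option.some_ne_none _
            have hfut : ∃ w, ¬ Past w ∧ occ c w ≠ none := by
              by_contra hnone
              push_neg at hnone
              exact hnf (fun w hw => by
                by_contra hpw
                exact hw (hnone w hpw))
            have hvmem : Sum.inl v ∈ B jt := hkey c hfut hcmem v hv hvocc'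
            have hval : a (π.symm v) = a' (π.symm v) := by
              by_cases hva : a (π.symm v) = true
              · have h1 : Sum.inl v ∈ (B jt).filter (fun x => match x with
                  | Sum.inl v => Past v ∧ a (π.symm v) = true
                  | Sum.inr c => (¬ Fin' c) ∧ SatA c a) := by
                  rw [Finset.mem_filter]; exact ⟨hvmem, ⟨hv, hva⟩⟩
                have h2 := (hsetmem (Sum.inl v)).mp h1
                rw [Finset.mem_filter] at h2
                rw [hva, h2.2.2]
              · have h1 : Sum.inl v ∉ (B jt).filter (fun x => match x with
                  | Sum.inl v => Past v ∧ a' (π.symm v) = true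
                  | Sum.inr c => (¬ Fin' c) ∧ SatA c a') := by
                  intro h1
                  have h2 := (hsetmem (Sum.inl v)).mpr h1
                  rw [Finset.mem_filter] at h2
                  exact hva h2.2.2
                have hva' : ¬ (a' (π.symm v) = true) := by
                  intro h2
                  exact h1 (by rw [Finset.mem_filter]; exact ⟨hvmem, ⟨hv, h2⟩⟩)
                rw [Bool.not_eq_true] at hva hva'
                rw [hva, hva']
            exact ⟨v, hv, by rw [hvocc, hval]⟩
        -- now prove the clause c is satisfied under a'
        obtain ⟨v, b, hocc, hmix⟩ := hP c
        by_cases hv : Past v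
        · -- satisfied via a past variable: SatA c a holds
          have hsa : SatA c a := ⟨v, hv, by rw [hocc, ← hmix, if_pos hv]⟩
          have hsa' : SatA c a' := by
            by_cases hfc : Fin' c
            · exact (hbit.mp hfinsat) c hfc
            · exact hSatAtrans c hfc hsa
          obtain ⟨v', hv', hocc'⟩ := hsa'
          exact ⟨v', a' (π.symm v'), hocc', by rw [if_pos hv']⟩
        · exact ⟨v, b, hocc, by rw [if_neg hv]; rw [if_neg hv] at hmix; exact hmix⟩
      intro a a' hΦeq
      funext y
      show F _ = F _
      rw [hF]
      unfold cnfEval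
      exact decide_eq_decide.mpr ⟨aux a a' hΦeq y, aux a' a hΦeq.symm y⟩
    -- counting
    have h1 : (Finset.image (subfun F π t) Finset.univ).card ≤
        (Finset.image Φ Finset.univ).card :=
      card_image_le_of_factor _ _ hdet
    have h2 : Finset.image Φ Finset.univ ⊆
        (Finset.univ : Finset Bool) ×ˢ (B jt).powerset := by
      intro x hx
      obtain ⟨a, -, rfl⟩ := Finset.mem_image.mp hx
      rw [Finset.mem_product]
      exact ⟨Finset.mem_univ _, Finset.mem_powerset.mpr (Finset.filter_subset _ _)⟩
    have h3 : ((Finset.univ : Finset Bool) ×ˢ (B jt).powerset).card ≤ 2 ^ (p + 2) := by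
      rw [Finset.card_product, Finset.card_powerset]
      have : (Finset.univ : Finset Bool).card = 2 := by simp
      rw [this]
      have hb : (B jt).card ≤ p + 1 := hw jt
      calc 2 * 2 ^ (B jt).card ≤ 2 * 2 ^ (p+1) :=
            Nat.mul_le_mul_left _ (Nat.pow_le_pow_right (by norm_num) hb)
        _ = 2 ^ (p+2) := by ring
    exact h1.trans ((Finset.card_le_card h2).trans h3)

end LemmaB

theorem part1 {nv nc p rr : ℕ} (occ : Fin nc → Fin nv → Option Bool)
    (B : Fin rr → Finset (Fin nv ⊕ Fin nc))
    (hPD : IsPathDecomp (incGraph occ) rr B) (hw : ∀ j, (B j).card ≤ p + 1) :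
    ∃ (π : Fin nv ≃ Fin nv) (D : OBDD nv),
      D.Computes (cnfEval occ) π ∧ D.size ≤ 4 * 2 ^ p * (nv + 1) := by
  obtain ⟨π, hbound⟩ := subfun_bound_of_pathdecomp occ B hPD hw
  obtain ⟨D, hcomp, hsize⟩ := obdd_of_subfun_bound (cnfEval occ) π (2 ^ (p+2))
    (Nat.pow_pos (by norm_num)) hbound
  refine ⟨π, D, hcomp, ?_⟩
  rw [hsize]
  have : (nv+1) * 2 ^ (p+2) = 4 * 2 ^ p * (nv+1) := by ring
  omega

section PDXsec

open Finset

set_option linter.unusedSectionVars false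

variable {V : Type*} [Fintype V] [DecidableEq V]

/-- A path decomposition of the part of `G` induced on `A`, with all bags of size `≤ w`. -/
def PDX (G : SimpleGraph V) (A : Finset V) (w : ℕ) : Prop :=
  ∃ (rr : ℕ) (B : Fin rr → Finset V),
    (∀ j, B j ⊆ A) ∧
    (∀ x ∈ A, ∃ j, x ∈ B j) ∧
    (∀ a b, G.Adj a b → a ∈ A → b ∈ A → ∃ j, a ∈ B j ∧ b ∈ B j) ∧
    (∀ x (j₁ j₂ j₃ : Fin rr), j₁ ≤ j₂ → j₂ ≤ j₃ → x ∈ B j₁ → x ∈ B j₃ → x ∈ B j₂) ∧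
    (∀ j, (B j).card ≤ w)

variable {G : SimpleGraph V}

lemma PDX.mono {A : Finset V} {w w' : ℕ} (h : PDX G A w) (hw : w ≤ w') : PDX G A w' := by
  obtain ⟨rr, B, h1, h2, h3, h4, h5⟩ := h
  exact ⟨rr, B, h1, h2, h3, h4, fun j => (h5 j).trans hw⟩

lemma PDX.empty (w : ℕ) : PDX G ∅ w := by
  refine ⟨0, Fin.elim0, ?_, ?_, ?_, ?_, ?_⟩ <;>
    first
      | exact fun j => j.elim0
      | intro x hx; exact absurd hx (Finset.notMem_empty x)
      | intro a b hab ha hb; exact absurd ha (Finset.notMem_empty a)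
      | intro x j₁; exact j₁.elim0

lemma PDX.union {A₁ A₂ : Finset V} {w : ℕ} (h₁ : PDX G A₁ w) (h₂ : PDX G A₂ w)
    (hdis : Disjoint A₁ A₂) (hsep : ∀ a ∈ A₁, ∀ b ∈ A₂, ¬ G.Adj a b) :
    PDX G (A₁ ∪ A₂) w := by
  obtain ⟨r₁, B₁, s1, c1, e1, v1, b1⟩ := h₁
  obtain ⟨r₂, B₂, s2, c2, e2, v2, b2⟩ := h₂
  set B' : Fin (r₁ + r₂) → Finset V := fun j =>
    if h : (j : ℕ) < r₁ then B₁ ⟨j, h⟩ else B₂ ⟨(j : ℕ) - r₁, by omega⟩ with hB'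
  have hsp1 : ∀ (j : Fin (r₁ + r₂)) (h : (j : ℕ) < r₁), B' j = B₁ ⟨j, h⟩ := by
    intro j h; rw [hB']; exact dif_pos h
  have hsp2 : ∀ (j : Fin (r₁ + r₂)) (h : ¬ (j : ℕ) < r₁),
      B' j = B₂ ⟨(j : ℕ) - r₁, by omega⟩ := by
    intro j h; rw [hB']; exact dif_neg h
  have hnotboth : ∀ (x : V) (j j' : Fin (r₁ + r₂)), x ∈ B' j → x ∈ B' j' →
      ((j : ℕ) < r₁ ↔ (j' : ℕ) < r₁) := by
    intro x j j' hj hj'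
    constructor <;> intro h <;> by_contra h'
    · rw [hsp1 j h] at hj; rw [hsp2 j' h'] at hj'
      exact Finset.disjoint_left.mp hdis (s1 _ hj) (s2 _ hj')
    · rw [hsp1 j' h] at hj'; rw [hsp2 j h'] at hj
      exact Finset.disjoint_left.mp hdis (s1 _ hj') (s2 _ hj)
  refine ⟨r₁ + r₂, B', ?_, ?_, ?_, ?_, ?_⟩
  · intro j
    by_cases h : (j : ℕ) < r₁
    · rw [hsp1 j h]; exact (s1 _).trans Finset.subset_union_left
    · rw [hsp2 j h]; exact (s2 _).trans Finset.subset_union_right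
  · intro x hx
    rcases Finset.mem_union.mp hx with hx | hx
    · obtain ⟨j, hj⟩ := c1 x hx
      have hlt : ((⟨(j : ℕ), by omega⟩ : Fin (r₁ + r₂)) : ℕ) < r₁ := j.isLt
      exact ⟨⟨(j : ℕ), by omega⟩, by rw [hsp1 _ hlt]; simpa using hj⟩
    · obtain ⟨j, hj⟩ := c2 x hx
      have hlt : ¬ ((⟨r₁ + (j : ℕ), by omega⟩ : Fin (r₁ + r₂)) : ℕ) < r₁ := by simp
      refine ⟨⟨r₁ + (j : ℕ), by omega⟩, ?_⟩
      rw [hsp2 _ hlt]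
      have : r₁ + (j : ℕ) - r₁ = (j : ℕ) := by omega
      simp only [this]
      simpa using hj
  · intro a b hab ha hb
    rcases Finset.mem_union.mp ha with ha' | ha' <;> rcases Finset.mem_union.mp hb with hb' | hb'
    · obtain ⟨j, hj1, hj2⟩ := e1 a b hab ha' hb'
      have hlt : ((⟨(j : ℕ), by omega⟩ : Fin (r₁ + r₂)) : ℕ) < r₁ := j.isLt
      refine ⟨⟨(j : ℕ), by omega⟩, ?_, ?_⟩ <;> · rw [hsp1 _ hlt]; simpa using ‹_›
    · exact absurd hab (hsep a ha' b hb')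
    · exact absurd hab.symm (hsep b hb' a ha')
    · obtain ⟨j, hj1, hj2⟩ := e2 a b hab ha' hb'
      have hlt : ¬ ((⟨r₁ + (j : ℕ), by omega⟩ : Fin (r₁ + r₂)) : ℕ) < r₁ := by simp
      have heq : r₁ + (j : ℕ) - r₁ = (j : ℕ) := by omega
      refine ⟨⟨r₁ + (j : ℕ), by omega⟩, ?_, ?_⟩ <;>
        · rw [hsp2 _ hlt]; simp only [heq]; simpa using ‹_›
  · intro x j₁ j₂ j₃ h12 h23 hx1 hx3
    have h12' := Fin.le_def.mp h12
    have h23' := Fin.le_def.mp h23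
    by_cases hc1 : (j₁ : ℕ) < r₁
    · have hc3 : (j₃ : ℕ) < r₁ := (hnotboth x j₁ j₃ hx1 hx3).mp hc1
      have hc2 : (j₂ : ℕ) < r₁ := by omega
      rw [hsp1 j₁ hc1] at hx1; rw [hsp1 j₃ hc3] at hx3; rw [hsp1 j₂ hc2]
      exact v1 x ⟨j₁, hc1⟩ ⟨j₂, hc2⟩ ⟨j₃, hc3⟩ (Fin.mk_le_mk.mpr h12')
        (Fin.mk_le_mk.mpr h23') hx1 hx3
    · have hc3 : ¬ (j₃ : ℕ) < r₁ := fun h => hc1 ((hnotboth x j₁ j₃ hx1 hx3).mpr h)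
      have hc2 : ¬ (j₂ : ℕ) < r₁ := by omega
      rw [hsp2 j₁ hc1] at hx1; rw [hsp2 j₃ hc3] at hx3; rw [hsp2 j₂ hc2]
      refine v2 x ⟨(j₁ : ℕ) - r₁, by omega⟩ ⟨(j₂ : ℕ) - r₁, by omega⟩ ⟨(j₃ : ℕ) - r₁, by omega⟩
        ?_ ?_ hx1 hx3
      · exact Fin.mk_le_mk.mpr (by omega)
      · exact Fin.mk_le_mk.mpr (by omega)
  · intro j
    by_cases h : (j : ℕ) < r₁
    · rw [hsp1 j h]; exact b1 _
    · rw [hsp2 j h]; exact b2 _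

end PDXsec

section PDXsec2

set_option linter.unusedSectionVars false

open Finset

variable {V : Type*} [Fintype V] [DecidableEq V] {G : SimpleGraph V}

lemma PDX.addSep {A : Finset V} {w : ℕ} (h : PDX G A w) (S : Finset V) :
    PDX G (A ∪ S) (w + S.card) := by
  obtain ⟨rr, B, s1, c1, e1, v1, b1⟩ := h
  set B' : Fin (rr + 1) → Finset V := fun j =>
    if h : (j : ℕ) < rr then B ⟨j, h⟩ ∪ S else S with hB'
  have hsp1 : ∀ (j : Fin (rr + 1)) (h : (j : ℕ) < rr), B' j = B ⟨j, h⟩ ∪ S := by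
    intro j h; rw [hB']; exact dif_pos h
  have hsp2 : ∀ (j : Fin (rr + 1)) (h : ¬ (j : ℕ) < rr), B' j = S := by
    intro j h; rw [hB']; exact dif_neg h
  have hSsub : ∀ j, S ⊆ B' j := by
    intro j
    by_cases h : (j : ℕ) < rr
    · rw [hsp1 j h]; exact Finset.subset_union_right
    · rw [hsp2 j h]
  refine ⟨rr + 1, B', ?_, ?_, ?_, ?_, ?_⟩
  · intro j
    by_cases h : (j : ℕ) < rr
    · rw [hsp1 j h]
      exact Finset.union_subset_union (s1 _) subset_rfl
    · rw [hsp2 j h]; exact Finset.subset_union_right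
  · intro x hx
    rcases Finset.mem_union.mp hx with hx | hx
    · obtain ⟨j, hj⟩ := c1 x hx
      have hlt : ((⟨(j : ℕ), by omega⟩ : Fin (rr + 1)) : ℕ) < rr := j.isLt
      refine ⟨⟨(j : ℕ), by omega⟩, ?_⟩
      rw [hsp1 _ hlt]
      exact Finset.mem_union_left _ (by simpa using hj)
    · exact ⟨⟨rr, by omega⟩, hSsub _ hx⟩
  · intro a b hab ha hb
    rcases Finset.mem_union.mp ha with ha' | ha'
    · rcases Finset.mem_union.mp hb with hb' | hb'
      · obtain ⟨j, hj1, hj2⟩ := e1 a b hab ha' hb'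
        have hlt : ((⟨(j : ℕ), by omega⟩ : Fin (rr + 1)) : ℕ) < rr := j.isLt
        refine ⟨⟨(j : ℕ), by omega⟩, ?_, ?_⟩ <;>
          · rw [hsp1 _ hlt]; exact Finset.mem_union_left _ (by simpa using ‹_›)
      · obtain ⟨j, hj⟩ := c1 a ha'
        have hlt : ((⟨(j : ℕ), by omega⟩ : Fin (rr + 1)) : ℕ) < rr := j.isLt
        refine ⟨⟨(j : ℕ), by omega⟩, ?_, hSsub _ hb'⟩
        rw [hsp1 _ hlt]
        exact Finset.mem_union_left _ (by simpa using hj)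
    · rcases Finset.mem_union.mp hb with hb' | hb'
      · obtain ⟨j, hj⟩ := c1 b hb'
        have hlt : ((⟨(j : ℕ), by omega⟩ : Fin (rr + 1)) : ℕ) < rr := j.isLt
        refine ⟨⟨(j : ℕ), by omega⟩, ?_, ?_⟩
        · exact hSsub _ ha'
        · rw [hsp1 _ hlt]; exact Finset.mem_union_left _ (by simpa using hj)
      · exact ⟨⟨rr, by omega⟩, hSsub _ ha', hSsub _ hb'⟩
  · intro x j₁ j₂ j₃ h12 h23 hx1 hx3
    by_cases hxS : x ∈ S
    · exact hSsub _ hxS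
    · have h12' := Fin.le_def.mp h12
      have h23' := Fin.le_def.mp h23
      have hmem : ∀ (j : Fin (rr + 1)), x ∈ B' j → ∃ h : (j : ℕ) < rr, x ∈ B ⟨j, h⟩ := by
        intro j hj
        by_cases h : (j : ℕ) < rr
        · rw [hsp1 j h] at hj
          rcases Finset.mem_union.mp hj with hj | hj
          · exact ⟨h, hj⟩
          · exact absurd hj hxS
        · rw [hsp2 j h] at hj; exact absurd hj hxS
      obtain ⟨hc1, hx1'⟩ := hmem j₁ hx1
      obtain ⟨hc3, hx3'⟩ := hmem j₃ hx3
      have hc2 : (j₂ : ℕ) < rr := by omega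
      rw [hsp1 j₂ hc2]
      exact Finset.mem_union_left _
        (v1 x ⟨j₁, hc1⟩ ⟨j₂, hc2⟩ ⟨j₃, hc3⟩ (Fin.mk_le_mk.mpr h12') (Fin.mk_le_mk.mpr h23')
          hx1' hx3')
  · intro j
    by_cases h : (j : ℕ) < rr
    · rw [hsp1 j h]
      exact (Finset.card_union_le _ _).trans (by have := b1 ⟨j, h⟩; omega)
    · rw [hsp2 j h]; omega

end PDXsec2

section Components

set_option linter.unusedSectionVars false

open Finset

variable {V : Type*} [Fintype V] [DecidableEq V]

attribute [local instance] Classical.propDecidable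

/-- reachability within a vertex subset -/
def ReachW (G : SimpleGraph V) (s : Finset V) (x y : V) : Prop :=
  ∃ w : G.Walk x y, ∀ z ∈ w.support, z ∈ s

/-- the connected component of `x` inside `s` -/
noncomputable def gcmp (G : SimpleGraph V) (s : Finset V) (x : V) : Finset V :=
  s.filter (fun y => ReachW G s x y)

variable {G : SimpleGraph V}

lemma ReachW.refl {s : Finset V} {x : V} (hx : x ∈ s) : ReachW G s x x :=
  ⟨SimpleGraph.Walk.nil, by simpa using hx⟩

lemma ReachW.symm {s : Finset V} {x y : V} (h : ReachW G s x y) : ReachW G s y x := by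
  obtain ⟨w, hw⟩ := h
  exact ⟨w.reverse, fun z hz => hw z (by simpa using hz)⟩

lemma ReachW.trans {s : Finset V} {x y z : V} (h : ReachW G s x y) (h' : ReachW G s y z) :
    ReachW G s x z := by
  obtain ⟨w, hw⟩ := h
  obtain ⟨w', hw'⟩ := h'
  refine ⟨w.append w', fun u hu => ?_⟩
  rcases (SimpleGraph.Walk.mem_support_append_iff _ _).mp hu with hu | hu
  · exact hw u hu
  · exact hw' u hu

lemma ReachW.mem_left {s : Finset V} {x y : V} (h : ReachW G s x y) : x ∈ s := by
  obtain ⟨w, hw⟩ := h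
  exact hw x w.start_mem_support

lemma ReachW.mem_right {s : Finset V} {x y : V} (h : ReachW G s x y) : y ∈ s := by
  obtain ⟨w, hw⟩ := h
  exact hw y w.end_mem_support

lemma ReachW.adj {s : Finset V} {x y z : V} (h : ReachW G s x y) (ha : G.Adj y z)
    (hz : z ∈ s) : ReachW G s x z :=
  h.trans ⟨SimpleGraph.Walk.cons ha SimpleGraph.Walk.nil, by
    intro u hu
    simp only [SimpleGraph.Walk.support_cons, SimpleGraph.Walk.support_nil,
      List.mem_cons, List.mem_singleton] at hu
    rcases hu with hu | hu | hu
    · subst hu; exact h.mem_right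
    · subst hu; exact hz
    · simp at hu⟩

lemma mem_gcmp_self {s : Finset V} {x : V} (hx : x ∈ s) : x ∈ gcmp G s x := by
  rw [gcmp, Finset.mem_filter]
  exact ⟨hx, ReachW.refl hx⟩

lemma gcmp_subset {s : Finset V} {x : V} : gcmp G s x ⊆ s := by
  rw [gcmp]; exact Finset.filter_subset _ _

lemma mem_gcmp_iff {s : Finset V} {x y : V} : y ∈ gcmp G s x ↔ y ∈ s ∧ ReachW G s x y := by
  rw [gcmp, Finset.mem_filter]

lemma gcmp_eq_of_mem {s : Finset V} {x y : V} (h : y ∈ gcmp G s x) : gcmp G s x = gcmp G s y := by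
  have hr := (mem_gcmp_iff.mp h).2
  ext z
  rw [mem_gcmp_iff, mem_gcmp_iff]
  exact ⟨fun ⟨hz, hr'⟩ => ⟨hz, hr.symm.trans hr'⟩, fun ⟨hz, hr'⟩ => ⟨hz, hr.trans hr'⟩⟩

lemma gcmp_adj_closed {s : Finset V} {x y z : V} (hy : y ∈ gcmp G s x) (ha : G.Adj y z)
    (hz : z ∈ s) : z ∈ gcmp G s x := by
  rw [mem_gcmp_iff] at hy ⊢
  exact ⟨hz, hy.2.adj ha hz⟩

lemma mem_foldr_union {l : List (Finset V)} {x : V} :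
    x ∈ l.foldr (· ∪ ·) ∅ ↔ ∃ C ∈ l, x ∈ C := by
  induction l with
  | nil => simp
  | cons C l ih => simp [ih]

lemma pdx_list {w : ℕ} (l : List (Finset V)) (hpd : ∀ C ∈ l, PDX G C w)
    (hnd : l.Pairwise (fun C C' => Disjoint C C' ∧ ∀ a ∈ C, ∀ b ∈ C', ¬ G.Adj a b)) :
    PDX G (l.foldr (· ∪ ·) ∅) w := by
  induction l with
  | nil => exact PDX.empty w
  | cons C l ih =>
    rw [List.pairwise_cons] at hnd
    have hC : PDX G C w := hpd C (by simp)
    have hrest : PDX G (l.foldr (· ∪ ·) ∅) w :=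
      ih (fun C' hC' => hpd C' (by simp [hC'])) hnd.2
    show PDX G (C ∪ l.foldr (· ∪ ·) ∅) w
    apply hC.union hrest
    · rw [Finset.disjoint_left]
      intro a ha ha'
      obtain ⟨C', hC', haC'⟩ := mem_foldr_union.mp ha'
      exact Finset.disjoint_left.mp (hnd.1 C' hC').1 ha haC'
    · intro a ha b hb
      obtain ⟨C', hC', hbC'⟩ := mem_foldr_union.mp hb
      exact (hnd.1 C' hC').2 a ha b hbC'

/-- base case: a set with at most one "variable" vertex, in a graph where every
edge touches a variable. -/
lemma pdx_base (pv : V → Prop) [DecidablePred pv]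
    (hbip : ∀ a b : V, G.Adj a b → pv a ∨ pv b)
    (A : Finset V) (hA : (A.filter pv).card ≤ 1) : PDX G A 2 := by
  classical
  set vs := A.filter pv with hvs
  set cs := A.filter (fun x => ¬ pv x) with hcs
  have hunion : vs ∪ cs = A := Finset.filter_union_filter_not_eq _ A
  by_cases hcse : cs = ∅
  · -- then A = vs has at most one element
    have hAcard : A.card ≤ 1 := by
      have : A = vs := by rw [← hunion, hcse, Finset.union_empty]
      rw [this]; exact hA
    refine ⟨1, fun _ => A, fun _ => subset_rfl, fun x hx => ⟨0, hx⟩,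
      fun a b _ ha hb => ⟨0, ha, hb⟩, fun x j₁ j₂ j₃ _ _ h _ => by
        have : j₂ = j₁ := Subsingleton.elim _ _
        rw [this]; exact h, fun _ => hAcard.trans (by omega)⟩
  · have hcsne : cs.Nonempty := Finset.nonempty_of_ne_empty hcse
    have hpos : 0 < cs.card := Finset.card_pos.mpr hcsne
    set L := cs.toList with hL
    have hlen : L.length = cs.card := Finset.length_toList _
    have hmemL : ∀ c, c ∈ L ↔ c ∈ cs := fun c => Finset.mem_toList
    have hnodup : L.Nodup := Finset.nodup_toList _
    set B' : Fin cs.card → Finset V := fun j => vs ∪ {L.get (Fin.cast hlen.symm j)} with hB'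
    refine ⟨cs.card, B', ?_, ?_, ?_, ?_, ?_⟩
    · intro j
      rw [hB']
      apply Finset.union_subset (Finset.filter_subset _ _)
      intro z hz
      rw [Finset.mem_singleton] at hz
      subst hz
      have : L.get (Fin.cast hlen.symm j) ∈ cs := (hmemL _).mp (List.get_mem L _)
      exact (Finset.filter_subset _ _) this
    · intro x hx
      by_cases hpx : pv x
      · exact ⟨⟨0, hpos⟩, Finset.mem_union_left _ (Finset.mem_filter.mpr ⟨hx, hpx⟩)⟩
      · have : x ∈ L := (hmemL _).mpr (Finset.mem_filter.mpr ⟨hx, hpx⟩)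
        obtain ⟨j, hj⟩ := List.mem_iff_get.mp this
        refine ⟨⟨(j : ℕ), by omega⟩, Finset.mem_union_right _ ?_⟩
        rw [Finset.mem_singleton]
        have hc : (Fin.cast hlen.symm (⟨(j : ℕ), by omega⟩ : Fin cs.card)) = j := by
          apply Fin.ext; simp
        rw [hc, hj]
    · intro a b hab ha hb
      -- at least one endpoint is a variable
      rcases hbip a b hab with hpa | hpb
      · by_cases hpb : pv b
        · exact ⟨⟨0, hpos⟩, Finset.mem_union_left _ (Finset.mem_filter.mpr ⟨ha, hpa⟩),
            Finset.mem_union_left _ (Finset.mem_filter.mpr ⟨hb, hpb⟩)⟩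
        · have : b ∈ L := (hmemL _).mpr (Finset.mem_filter.mpr ⟨hb, hpb⟩)
          obtain ⟨j, hj⟩ := List.mem_iff_get.mp this
          refine ⟨⟨(j : ℕ), by omega⟩, Finset.mem_union_left _ (Finset.mem_filter.mpr ⟨ha, hpa⟩),
            Finset.mem_union_right _ ?_⟩
          rw [Finset.mem_singleton]
          have hc : (Fin.cast hlen.symm (⟨(j : ℕ), by omega⟩ : Fin cs.card)) = j := by
            apply Fin.ext; simp
          rw [hc, hj]
      · by_cases hpa : pv a
        · exact ⟨⟨0, hpos⟩, Finset.mem_union_left _ (Finset.mem_filter.mpr ⟨ha, hpa⟩),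
            Finset.mem_union_left _ (Finset.mem_filter.mpr ⟨hb, hpb⟩)⟩
        · have : a ∈ L := (hmemL _).mpr (Finset.mem_filter.mpr ⟨ha, hpa⟩)
          obtain ⟨j, hj⟩ := List.mem_iff_get.mp this
          refine ⟨⟨(j : ℕ), by omega⟩, Finset.mem_union_right _ ?_,
            Finset.mem_union_left _ (Finset.mem_filter.mpr ⟨hb, hpb⟩)⟩
          rw [Finset.mem_singleton]
          have hc : (Fin.cast hlen.symm (⟨(j : ℕ), by omega⟩ : Fin cs.card)) = j := by
            apply Fin.ext; simp
          rw [hc, hj]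
    · intro x j₁ j₂ j₃ h12 h23 hx1 hx3
      by_cases hpx : pv x
      · -- x is in every bag if it is in one of them
        have hxA : x ∈ A := by
          rcases Finset.mem_union.mp hx1 with h | h
          · exact (Finset.filter_subset _ _) h
          · rw [Finset.mem_singleton] at h; subst h
            exact (Finset.filter_subset _ _) ((hmemL _).mp (List.get_mem L _))
        exact Finset.mem_union_left _ (Finset.mem_filter.mpr ⟨hxA, hpx⟩)
      · have hget : ∀ (j : Fin cs.card), x ∈ B' j → x = L.get (Fin.cast hlen.symm j) := by
          intro j hj
          rcases Finset.mem_union.mp hj with h | h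
          · exact absurd (Finset.mem_filter.mp h).2 hpx
          · exact Finset.mem_singleton.mp h
        have h1 := hget j₁ hx1
        have h3 := hget j₃ hx3
        have hj13 : j₁ = j₃ := by
          have hg : L.get (Fin.cast hlen.symm j₁) = L.get (Fin.cast hlen.symm j₃) := by
            rw [← h1, ← h3]
          have := (List.Nodup.get_inj_iff hnodup).mp hg
          apply Fin.ext
          simpa [Fin.ext_iff] using this
        have hj21 : j₂ = j₁ := le_antisymm (hj13 ▸ h23) h12
        rw [hj21]; exact hx1
    · intro j
      rw [hB']
      exact (Finset.card_union_le _ _).trans (by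
        have h1 : vs.card ≤ 1 := hA
        have h2 : ({L.get (Fin.cast hlen.symm j)} : Finset V).card = 1 :=
          Finset.card_singleton _
        omega)

end Components

section Separator

set_option linter.unusedSectionVars false
set_option maxHeartbeats 1000000

open Finset SimpleGraph

attribute [local instance] Classical.decEq

variable {ι : Type*} {T : SimpleGraph ι}

/-- connectivity in `T` avoiding the vertex `i` -/
def TRel (T : SimpleGraph ι) (i l l' : ι) : Prop := ∃ q : T.Walk l l', i ∉ q.support

lemma TRel.symm {i l l' : ι} (h : TRel T i l l') : TRel T i l' l := by
  obtain ⟨q, hq⟩ := h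
  exact ⟨q.reverse, by simpa using hq⟩

lemma TRel.trans {i l l' l'' : ι} (h : TRel T i l l') (h' : TRel T i l' l'') :
    TRel T i l l'' := by
  obtain ⟨q, hq⟩ := h
  obtain ⟨q', hq'⟩ := h'
  refine ⟨q.append q', fun hz => ?_⟩
  rcases (SimpleGraph.Walk.mem_support_append_iff _ _).mp hz with hz | hz
  · exact hq hz
  · exact hq' hz

lemma walk_of_induce {s : Set ι} {a b : {x // x ∈ s}}
    (W : (SimpleGraph.induce s T).Walk a b) :
    ∃ q : T.Walk a.1 b.1, ∀ z ∈ q.support, z ∈ s := by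
  induction W with
  | nil =>
    refine ⟨SimpleGraph.Walk.nil, fun z hz => ?_⟩
    simp only [SimpleGraph.Walk.support_nil, List.mem_singleton] at hz
    subst hz
    exact Subtype.coe_prop _
  | @cons u c b h W ih =>
    obtain ⟨q, hq⟩ := ih
    have h' : T.Adj u.1 c.1 := h
    refine ⟨SimpleGraph.Walk.cons h' q, fun z hz => ?_⟩
    simp only [SimpleGraph.Walk.support_cons, List.mem_cons] at hz
    rcases hz with hz | hz
    · subst hz; exact Subtype.coe_prop _
    · exact hq z hz

lemma trel_nbr_eq (hT : T.IsTree) {i y j : ι} (hiy : T.Adj i y) (hij : T.Adj i j)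
    (h : TRel T i y j) : y = j := by
  obtain ⟨q, hq⟩ := h
  have hq' : q.bypass.IsPath := SimpleGraph.Walk.bypass_isPath q
  have hq'' : i ∉ q.bypass.support := fun hz => hq (SimpleGraph.Walk.support_bypass_subset q hz)
  have p1 : (SimpleGraph.Walk.cons hij SimpleGraph.Walk.nil).IsPath := by
    rw [SimpleGraph.Walk.cons_isPath_iff]
    refine ⟨SimpleGraph.Walk.IsPath.nil, ?_⟩
    simp [hij.ne]
  have p2 : (SimpleGraph.Walk.cons hiy q.bypass).IsPath := by
    rw [SimpleGraph.Walk.cons_isPath_iff]; exact ⟨hq', hq''⟩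
  have hPeq := hT.2.path_unique (⟨_, p1⟩ : T.Path i j) ⟨_, p2⟩
  have hsup := congrArg (fun (p : T.Path i j) => (p : T.Walk i j).support) hPeq
  simp only [SimpleGraph.Walk.support_cons, SimpleGraph.Walk.support_nil] at hsup
  rw [SimpleGraph.Walk.support_eq_cons q.bypass] at hsup
  have := (List.cons.injEq _ _ _ _).mp hsup
  have := (List.cons.injEq _ _ _ _).mp this.2
  exact this.1.symm

lemma dist_step (hT : T.IsTree) {i j l : ι} (hij : T.Adj i j) (hrel : TRel T i j l) :
    T.dist i l = T.dist j l + 1 := by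
  have hCT := hT.1
  have hne_il : i ≠ l := by
    obtain ⟨q, hq⟩ := hrel
    intro h; subst h; exact hq q.end_mem_support
  have hle : T.dist i l ≤ T.dist j l + 1 := by
    have h1 : T.dist i j ≤ 1 := by
      have := SimpleGraph.dist_le (SimpleGraph.Walk.cons hij SimpleGraph.Walk.nil)
      simpa using this
    have h2 := hCT.dist_triangle (u := i) (v := j) (w := l)
    omega
  have hge : T.dist j l + 1 ≤ T.dist i l := by
    have key : ∀ p : T.Walk i l, p.length = T.dist i l → p.IsPath →
        T.dist j l + 1 ≤ T.dist i l := by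
      intro p
      cases p with
      | nil => intro _ _; exact absurd rfl hne_il
      | cons hadj q =>
        rename_i y
        intro hp hpath
        have hq : q.IsPath ∧ i ∉ q.support := (SimpleGraph.Walk.cons_isPath_iff _ _).mp hpath
        have hyl : TRel T i y l := ⟨q, hq.2⟩
        have hyj : TRel T i y j := hyl.trans hrel.symm
        have hy : y = j := trel_nbr_eq hT hadj hij hyj
        subst hy
        have hd : T.dist y l ≤ q.length := SimpleGraph.dist_le q
        have hlen : q.length + 1 = T.dist i l := by simpa using hp
        omega
    obtain ⟨p, hp⟩ := hCT.exists_walk_length_eq_dist i l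
    exact key p hp (p.isPath_of_length_eq_dist hp)
  omega

variable {V : Type*} [Fintype V] [DecidableEq V] {G : SimpleGraph V} {bag : ι → Finset V}

lemma trel_subtree (hconn : ∀ v : V, (SimpleGraph.induce {i | v ∈ bag i} T).Connected)
    {i : ι} {u : V} (hui : u ∉ bag i) {l l' : ι} (hl : u ∈ bag l) (hl' : u ∈ bag l') :
    TRel T i l l' := by
  obtain ⟨W⟩ := (hconn u).preconnected ⟨l, hl⟩ ⟨l', hl'⟩
  obtain ⟨q, hq⟩ := walk_of_induce W
  exact ⟨q, fun hz => hui (hq i hz)⟩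

lemma trel_chain (hconn : ∀ v : V, (SimpleGraph.induce {i | v ∈ bag i} T).Connected)
    (hedge : ∀ u v : V, G.Adj u v → ∃ i, u ∈ bag i ∧ v ∈ bag i)
    {s : Finset V} {i : ι} (hsb : ∀ u ∈ s, u ∉ bag i)
    {x y : V} (W : G.Walk x y) :
    (∀ z ∈ W.support, z ∈ s) → ∀ l l', x ∈ bag l → y ∈ bag l' → TRel T i l l' := by
  induction W with
  | nil =>
    intro hsup l l' hl hl'
    have hx : _ ∈ s := hsup _ (SimpleGraph.Walk.start_mem_support _)
    exact trel_subtree hconn (hsb _ hx) hl hl'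
  | @cons x x' y h W ih =>
    intro hsup l l' hl hl'
    have hxs : x ∈ s := hsup x (by simp [SimpleGraph.Walk.support_cons])
    have hx's : x' ∈ s := by
      apply hsup x'
      simp only [SimpleGraph.Walk.support_cons, List.mem_cons]
      exact Or.inr (SimpleGraph.Walk.start_mem_support _)
    obtain ⟨l₀, hxl₀, hx'l₀⟩ := hedge x x' h
    have h1 : TRel T i l l₀ := trel_subtree hconn (hsb _ hxs) hl hxl₀
    have h2 : TRel T i l₀ l' := by
      apply ih (fun z hz => hsup z (by simp [SimpleGraph.Walk.support_cons, hz])) l₀ l' hx'l₀ hl'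
    exact h1.trans h2

lemma balanced_bag (hT : T.IsTree)
    (hcov : ∀ v : V, ∃ i, v ∈ bag i)
    (hedge : ∀ u v : V, G.Adj u v → ∃ i, u ∈ bag i ∧ v ∈ bag i)
    (hconn : ∀ v : V, (SimpleGraph.induce {i | v ∈ bag i} T).Connected)
    (pv : V → Prop) [DecidablePred pv] (A : Finset V) :
    ∃ i : ι, ∀ x ∈ A \ bag i,
      2 * ((gcmp G (A \ bag i) x).filter pv).card ≤ (A.filter pv).card := by
  classical
  have hCT : T.Connected := hT.1
  have hNE : Nonempty ι := hCT.nonempty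
  choose nd hnd using hcov
  set Ψ : ι → ℕ := fun i => ∑ w ∈ A.filter pv, T.dist i (nd w) with hΨ
  set Bal : ι → Prop := fun i => ∀ x ∈ A \ bag i,
      2 * ((gcmp G (A \ bag i) x).filter pv).card ≤ (A.filter pv).card with hBal
  show ∃ i, Bal i
  have step : ∀ i : ι, ¬ Bal i → ∃ j : ι, Ψ j < Ψ i := by
    intro i hbal
    have hbal' : ¬ ∀ x ∈ A \ bag i,
        2 * ((gcmp G (A \ bag i) x).filter pv).card ≤ (A.filter pv).card := hbal
    push_neg at hbal'
    obtain ⟨x₀, hx₀, hbig⟩ := hbal'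
    set s : Finset V := A \ bag i with hs
    set K : Finset V := gcmp G s x₀ with hK
    have hsb : ∀ u ∈ s, u ∉ bag i := fun u hu => (Finset.mem_sdiff.mp hu).2
    have hKpos : 0 < (K.filter pv).card := by omega
    obtain ⟨w₀, hw₀⟩ := Finset.card_pos.mp hKpos
    have hw₀K : w₀ ∈ K := Finset.mem_of_mem_filter _ hw₀
    have hw₀s : w₀ ∈ s := gcmp_subset hw₀K
    have hndne : nd w₀ ≠ i := fun h => (hsb w₀ hw₀s) (h ▸ hnd w₀)
    have hex : ∃ j, T.Adj i j ∧ TRel T i j (nd w₀) := by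
      have key : ∀ p : T.Walk i (nd w₀), p.IsPath → ∃ j, T.Adj i j ∧ TRel T i j (nd w₀) := by
        intro p
        cases p with
        | nil => intro _; exact absurd rfl (Ne.symm hndne)
        | cons hadj q =>
          rename_i y
          intro hpath
          have hq : q.IsPath ∧ i ∉ q.support := (SimpleGraph.Walk.cons_isPath_iff _ _).mp hpath
          exact ⟨y, hadj, ⟨q, hq.2⟩⟩
      obtain ⟨p0⟩ := hCT.preconnected i (nd w₀)
      exact key p0.toPath p0.toPath.2
    obtain ⟨j, hadj, hrel₀⟩ := hex
    · have hrelw : ∀ w ∈ K, TRel T i j (nd w) := by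
        intro w hw
        have h1 : ReachW G s x₀ w := (mem_gcmp_iff.mp hw).2
        have h0 : ReachW G s x₀ w₀ := (mem_gcmp_iff.mp hw₀K).2
        obtain ⟨W, hW⟩ := h0.symm.trans h1
        have h2 : TRel T i (nd w₀) (nd w) :=
          trel_chain hconn hedge hsb W hW (nd w₀) (nd w) (hnd w₀) (hnd w)
        exact hrel₀.trans h2
      have hdistw : ∀ w ∈ K, T.dist i (nd w) = T.dist j (nd w) + 1 :=
        fun w hw => dist_step hT hadj (hrelw w hw)
      refine ⟨j, ?_⟩
      set Af := A.filter pv with hAf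
      set Kf := K.filter pv with hKf
      have hKsubA : K ⊆ A := gcmp_subset.trans (Finset.sdiff_subset)
      have hKf_sub : Kf ⊆ Af := Finset.filter_subset_filter _ hKsubA
      have hsplit_i : ∑ w ∈ Af \ Kf, T.dist i (nd w) + ∑ w ∈ Kf, T.dist i (nd w) = Ψ i :=
        Finset.sum_sdiff hKf_sub
      have hsplit_j : ∑ w ∈ Af \ Kf, T.dist j (nd w) + ∑ w ∈ Kf, T.dist j (nd w) = Ψ j :=
        Finset.sum_sdiff hKf_sub
      have h0 : ∀ w ∈ Kf, T.dist i (nd w) = T.dist j (nd w) + 1 := by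
        intro w hw
        rw [hKf] at hw
        exact hdistw w (Finset.mem_filter.mp hw).1
      have h1 : ∑ w ∈ Kf, T.dist i (nd w) = ∑ w ∈ Kf, T.dist j (nd w) + Kf.card := by
        rw [Finset.sum_congr rfl h0, Finset.sum_add_distrib, Finset.sum_const, smul_eq_mul,
          mul_one]
      have h2 : ∑ w ∈ Af \ Kf, T.dist j (nd w)
          ≤ ∑ w ∈ Af \ Kf, T.dist i (nd w) + (Af \ Kf).card := by
        calc ∑ w ∈ Af \ Kf, T.dist j (nd w)
            ≤ ∑ w ∈ Af \ Kf, (T.dist i (nd w) + 1) := by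
              apply Finset.sum_le_sum
              intro w _
              have hji : T.dist j i ≤ 1 := by
                have := SimpleGraph.dist_le (SimpleGraph.Walk.cons hadj.symm SimpleGraph.Walk.nil)
                simpa using this
              have := hCT.dist_triangle (u := j) (v := i) (w := nd w)
              omega
          _ = _ := by rw [Finset.sum_add_distrib, Finset.sum_const, smul_eq_mul, mul_one]
      have hcards : (Af \ Kf).card + Kf.card = Af.card := by
        rw [Finset.card_sdiff_add_card_eq_card hKf_sub]
      omega
  by_contra hno
  push_neg at hno
  have hdesc : ∀ (N : ℕ) (i : ι), Ψ i ≤ N → False := by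
    intro N
    induction N with
    | zero =>
      intro i hi
      obtain ⟨j, hj⟩ := step i (hno i)
      omega
    | succ N ih =>
      intro i hi
      obtain ⟨j, hj⟩ := step i (hno i)
      exact ih j (by omega)
  exact hdesc (Ψ (Classical.arbitrary ι)) _ le_rfl

end Separator

section Recursion

set_option linter.unusedSectionVars false
set_option maxHeartbeats 1000000

open Finset

variable {ι : Type*} {T : SimpleGraph ι}
variable {V : Type*} [Fintype V] [DecidableEq V] {G : SimpleGraph V} {bag : ι → Finset V}

lemma pdx_of_treedecomp (hT : T.IsTree)
    (hcov : ∀ v : V, ∃ i, v ∈ bag i)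
    (hedge : ∀ u v : V, G.Adj u v → ∃ i, u ∈ bag i ∧ v ∈ bag i)
    (hconn : ∀ v : V, (SimpleGraph.induce {i | v ∈ bag i} T).Connected)
    (pv : V → Prop) [DecidablePred pv]
    (hbip : ∀ a b : V, G.Adj a b → pv a ∨ pv b)
    (k : ℕ) (hk : ∀ i, (bag i).card ≤ k + 1) :
    ∀ (m : ℕ) (A : Finset V), (A.filter pv).card ≤ m →
      PDX G A ((k+1) * Nat.log 2 m + 2) := by
  intro m
  induction m using Nat.strong_induction_on with
  | _ m ih =>
    intro A hA
    by_cases hbase : (A.filter pv).card ≤ 1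
    · exact (pdx_base pv hbip A hbase).mono (by omega)
    · push_neg at hbase
      have hm2 : 2 ≤ m := by omega
      obtain ⟨i, hi⟩ := balanced_bag hT hcov hedge hconn pv A
      set s : Finset V := A \ bag i with hs
      set l : List (Finset V) := (s.image (fun x => gcmp G s x)).toList with hl
      have hmem : ∀ C, C ∈ l ↔ ∃ x ∈ s, gcmp G s x = C := by
        intro C; rw [hl, Finset.mem_toList, Finset.mem_image]
      have hpdC : ∀ C ∈ l, PDX G C ((k+1) * Nat.log 2 (m/2) + 2) := by
        intro C hC
        obtain ⟨x, hx, rfl⟩ := (hmem C).mp hC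
        apply ih (m/2) (Nat.div_lt_self (by omega) (by norm_num))
        have h1 := hi x hx
        have h2 : ((gcmp G s x).filter pv).card * 2 ≤ m := by
          have h3 : (A.filter pv).card ≤ m := hA
          omega
        exact (Nat.le_div_iff_mul_le (by norm_num)).mpr h2
      have hpair : l.Pairwise (fun C C' => Disjoint C C' ∧ ∀ a ∈ C, ∀ b ∈ C', ¬ G.Adj a b) := by
        apply List.Nodup.pairwise_of_forall_ne (Finset.nodup_toList _)
        intro C hC C' hC' hne
        obtain ⟨x, hx, rfl⟩ := (hmem C).mp hC
        obtain ⟨x', hx', rfl⟩ := (hmem C').mp hC'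
        constructor
        · rw [Finset.disjoint_left]
          intro a ha ha'
          exact hne (by rw [gcmp_eq_of_mem ha, ← gcmp_eq_of_mem ha'])
        · intro a ha b hb hadj
          have hbs : b ∈ s := gcmp_subset hb
          have hb2 : b ∈ gcmp G s x := gcmp_adj_closed ha hadj hbs
          exact hne (by rw [gcmp_eq_of_mem hb2, ← gcmp_eq_of_mem hb])
      have hfold : l.foldr (· ∪ ·) ∅ = s := by
        ext z
        rw [mem_foldr_union]
        constructor
        · rintro ⟨C, hC, hzC⟩
          obtain ⟨x, hx, rfl⟩ := (hmem C).mp hC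
          exact gcmp_subset hzC
        · intro hz
          exact ⟨gcmp G s z, (hmem _).mpr ⟨z, hz, rfl⟩, mem_gcmp_self hz⟩
      have hPDs : PDX G s ((k+1) * Nat.log 2 (m/2) + 2) := by
        have := pdx_list l hpdC hpair
        rwa [hfold] at this
      have hPDA : PDX G (s ∪ (bag i ∩ A)) ((k+1) * Nat.log 2 (m/2) + 2 + (bag i ∩ A).card) :=
        hPDs.addSep _
      have hAeq : s ∪ (bag i ∩ A) = A := by
        ext z
        simp only [Finset.mem_union, Finset.mem_sdiff, Finset.mem_inter, hs]
        tauto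
      rw [hAeq] at hPDA
      apply hPDA.mono
      have hlog : Nat.log 2 (m/2) + 1 ≤ Nat.log 2 m := by
        have h1 : Nat.log 2 (m/2) = Nat.log 2 m - 1 := Nat.log_div_base 2 m
        have h2 : 0 < Nat.log 2 m := Nat.log_pos (by norm_num) hm2
        omega
      have hcard : (bag i ∩ A).card ≤ k + 1 :=
        (Finset.card_le_card Finset.inter_subset_left).trans (hk i)
      calc (k+1) * Nat.log 2 (m/2) + 2 + (bag i ∩ A).card
          ≤ (k+1) * Nat.log 2 (m/2) + 2 + (k+1) := by omega
        _ = (k+1) * (Nat.log 2 (m/2) + 1) + 2 := by ring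
        _ ≤ (k+1) * Nat.log 2 m + 2 :=
            Nat.add_le_add_right (Nat.mul_le_mul_left _ hlog) 2

end Recursion

theorem part2 {nv nc k : ℕ} (occ : Fin nc → Fin nv → Option Bool)
    (ι : Type) (T : SimpleGraph ι) (bag : ι → Finset (Fin nv ⊕ Fin nc))
    (hTD : IsTreeDecomp (incGraph occ) T bag) (hk : ∀ i, (bag i).card ≤ k + 1) :
    ∃ (π : Fin nv ≃ Fin nv) (D : OBDD nv),
      D.Computes (cnfEval occ) π ∧ D.size ≤ (nv + 2) ^ (5 * (k + 1)) := by
  classical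
  obtain ⟨hT, hcov, hedge, hconn⟩ := hTD
  have hbip : ∀ a b, (incGraph occ).Adj a b →
      (fun (x : Fin nv ⊕ Fin nc) => x.isLeft = true) a ∨
      (fun (x : Fin nv ⊕ Fin nc) => x.isLeft = true) b := by
    intro a b hab
    rw [incGraph, SimpleGraph.fromRel_adj] at hab
    rcases hab.2 with h | h
    · cases a <;> cases b <;> simp_all
    · cases a <;> cases b <;> simp_all
  have hVC : ((Finset.univ : Finset (Fin nv ⊕ Fin nc)).filter
      (fun x => x.isLeft = true)).card ≤ nv := by
    have hsub : ((Finset.univ : Finset (Fin nv ⊕ Fin nc)).filter (fun x => x.isLeft = true))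
        ⊆ Finset.univ.image (Sum.inl : Fin nv → Fin nv ⊕ Fin nc) := by
      intro x hx
      rw [Finset.mem_filter] at hx
      cases x with
      | inl v => exact Finset.mem_image_of_mem _ (Finset.mem_univ v)
      | inr c => simp at hx
    calc _ ≤ _ := Finset.card_le_card hsub
      _ ≤ (Finset.univ : Finset (Fin nv)).card := Finset.card_image_le
      _ = nv := by simp
  have hPDX := pdx_of_treedecomp hT hcov hedge hconn
    (fun (x : Fin nv ⊕ Fin nc) => x.isLeft = true) hbip k hk nv Finset.univ hVC
  set L := Nat.log 2 nv with hL
  obtain ⟨rr, B, hsub, hcov', hedge', hconv', hcard'⟩ := hPDX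
  have hPD : IsPathDecomp (incGraph occ) rr B :=
    ⟨fun w => hcov' w (Finset.mem_univ w),
     fun a b hab => hedge' a b hab (Finset.mem_univ a) (Finset.mem_univ b), hconv'⟩
  have hw : ∀ j, (B j).card ≤ ((k+1) * L + 1) + 1 := by
    intro j
    have := hcard' j
    omega
  obtain ⟨π, D, hcomp, hsize⟩ := part1 occ B hPD hw
  refine ⟨π, D, hcomp, ?_⟩
  have h2L : 2 ^ L ≤ nv + 1 := by
    rcases Nat.eq_zero_or_pos nv with h | h
    · subst h; simp [hL]
    · exact (Nat.pow_log_le_self 2 (by omega)).trans (by omega)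
  have e1 : 4 * 2 ^ ((k+1) * L + 1) * (nv + 1) = 8 * (2 ^ L) ^ (k+1) * (nv + 1) := by
    rw [pow_succ, mul_comm (k+1) L, pow_mul]
    ring
  have hstep1 : D.size ≤ 8 * (nv + 1) ^ (k+1) * (nv + 1) := by
    calc D.size ≤ 4 * 2 ^ ((k+1) * L + 1) * (nv + 1) := hsize
      _ = 8 * (2 ^ L) ^ (k+1) * (nv + 1) := e1
      _ ≤ 8 * (nv + 1) ^ (k+1) * (nv + 1) := by
          have := Nat.pow_le_pow_left h2L (k+1)
          exact Nat.mul_le_mul_right _ (Nat.mul_le_mul_left _ this)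
  have hstep2 : 8 * (nv + 1) ^ (k+1) * (nv + 1) ≤ (nv + 2) ^ (k + 4) := by
    have h1 : 8 * (nv + 1) ≤ (nv + 2) ^ 3 := by
      have ha : 4 * (nv + 1) ≤ (nv + 2) ^ 2 := by nlinarith [sq_nonneg nv]
      calc 8 * (nv + 1) = 2 * (4 * (nv + 1)) := by ring
        _ ≤ 2 * (nv + 2) ^ 2 := by omega
        _ ≤ (nv + 2) * (nv + 2) ^ 2 := Nat.mul_le_mul_right _ (by omega)
        _ = (nv + 2) ^ 3 := by ring
    have h2 : (nv + 1) ^ (k+1) ≤ (nv + 2) ^ (k+1) := Nat.pow_le_pow_left (by omega) _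
    calc 8 * (nv + 1) ^ (k+1) * (nv + 1) = (8 * (nv + 1)) * (nv + 1) ^ (k+1) := by ring
      _ ≤ (nv + 2) ^ 3 * (nv + 2) ^ (k+1) := Nat.mul_le_mul h1 h2
      _ = (nv + 2) ^ (k + 4) := by rw [← pow_add]; ring_nf
  have hstep3 : (nv + 2) ^ (k + 4) ≤ (nv + 2) ^ (5 * (k + 1)) :=
    Nat.pow_le_pow_right (by omega) (by omega)
  omega

theorem stmt18final :
    (∃ C : ℕ, 0 < C ∧
      ∀ (nv nc p rr : ℕ) (occ : Fin nc → Fin nv → Option Bool)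
        (B : Fin rr → Finset (Fin nv ⊕ Fin nc)),
        IsPathDecomp (incGraph occ) rr B → (∀ j, (B j).card ≤ p + 1) →
        ∃ (π : Fin nv ≃ Fin nv) (D : OBDD nv),
          D.Computes (cnfEval occ) π ∧ D.size ≤ C * 2 ^ p * (nv + 1)) ∧
    (∃ C : ℕ, 0 < C ∧
      ∀ (nv nc k : ℕ) (occ : Fin nc → Fin nv → Option Bool)
        (ι : Type) (T : SimpleGraph ι) (bag : ι → Finset (Fin nv ⊕ Fin nc)),
        IsTreeDecomp (incGraph occ) T bag → (∀ i, (bag i).card ≤ k + 1) →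
        ∃ (π : Fin nv ≃ Fin nv) (D : OBDD nv),
          D.Computes (cnfEval occ) π ∧ D.size ≤ (nv + 2) ^ (C * (k + 1))) := by
  constructor
  · exact ⟨4, by norm_num, fun nv nc p rr occ B hPD hw => part1 occ B hPD hw⟩
  · exact ⟨5, by norm_num, fun nv nc k occ ι T bag hTD hk => part2 occ ι T bag hTD hk⟩

/-- a CNF with n variables whose incidence graph has pathwidth p
has an OBDD of size O(2^p · n); consequently a CNF whose incidence graph has
treewidth k has an OBDD of size n^{O(k)}. -/
theorem stmt18 :
    (∃ C : ℕ, 0 < C ∧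
      ∀ (nv nc p rr : ℕ) (occ : Fin nc → Fin nv → Option Bool)
        (B : Fin rr → Finset (Fin nv ⊕ Fin nc)),
        IsPathDecomp (incGraph occ) rr B → (∀ j, (B j).card ≤ p + 1) →
        ∃ (π : Fin nv ≃ Fin nv) (D : OBDD nv),
          D.Computes (cnfEval occ) π ∧ D.size ≤ C * 2 ^ p * (nv + 1)) ∧
    (∃ C : ℕ, 0 < C ∧
      ∀ (nv nc k : ℕ) (occ : Fin nc → Fin nv → Option Bool)
        (ι : Type) (T : SimpleGraph ι) (bag : ι → Finset (Fin nv ⊕ Fin nc)),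
        IsTreeDecomp (incGraph occ) T bag → (∀ i, (bag i).card ≤ k + 1) →
        ∃ (π : Fin nv ≃ Fin nv) (D : OBDD nv),
          D.Computes (cnfEval occ) π ∧ D.size ≤ (nv + 2) ^ (C * (k + 1))) :=
  stmt18final
end
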